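/- arXiv:1101.1400 — 3 statements merged into one kernel-verified Lean document; each statement's English description precedes it below -/
import Mathlib

section
/- Every braid β ∈ B_n admits a unique decomposition β = Δ_n^{−t} β', where t is a nonnegative integer and β' is an element of B⁺_n which, unless t = 0, is not left divisible by Δ_n. -/
namespace Braid

/-- Defining relations of the braid group, with generators indexed by `Fin m`
(the index `i : Fin m` stands for the Artin generator `σ_{i+1}`). -/
def braidRels (m : ℕ) : Set (FreeGroup (Fin m)) :=
  {r | ∃ i j : Fin m,
      ((i : ℕ) + 2 ≤ (j : ℕ) ∧
        r = FreeGroup.of i * FreeGroup.of j * (FreeGroup.of i)⁻¹ * (FreeGroup.of j)⁻¹) ∨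
      ((j : ℕ) = (i : ℕ) + 1 ∧
        r = FreeGroup.of i * FreeGroup.of j * FreeGroup.of i *
            (FreeGroup.of j)⁻¹ * (FreeGroup.of i)⁻¹ * (FreeGroup.of j)⁻¹)}

/-- The braid group `B_n` on `n` strands, presented by the Artin generators
`σ_1, …, σ_{n-1}` and the braid relations. -/
abbrev B (n : ℕ) : Type := PresentedGroup (braidRels (n - 1))

/-- The Artin generator `σ_i` of `B n`, for `1 ≤ i ≤ n-1` (junk value `1` otherwise). -/
def gen (n i : ℕ) : B n :=
  if h : i - 1 < n - 1 then PresentedGroup.of (⟨i - 1, h⟩ : Fin (n - 1)) else 1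

/-- The positive braid monoid `B⁺_k` inside `B n`: the submonoid generated by
`σ_1, …, σ_{k-1}`. -/
def Bplus (n k : ℕ) : Submonoid (B n) :=
  Submonoid.closure {x | ∃ i, 1 ≤ i ∧ i + 1 ≤ k ∧ x = gen n i}

/-- The subgroup `B_k` of `B n`, generated by `σ_1, …, σ_{k-1}`. -/
def Bsub (n k : ℕ) : Subgroup (B n) :=
  Subgroup.closure {x | ∃ i, 1 ≤ i ∧ i + 1 ≤ k ∧ x = gen n i}

/-- `β` left-divides `γ` (with respect to the positive monoid `B⁺_n`). -/
def LDiv (n : ℕ) (β γ : B n) : Prop := β⁻¹ * γ ∈ Bplus n n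

/-- `β` right-divides `γ` (with respect to the positive monoid `B⁺_n`). -/
def RDiv (n : ℕ) (β γ : B n) : Prop := γ * β⁻¹ ∈ Bplus n n

/-- The Garside element `Δ_k = (σ_1⋯σ_{k-1})(σ_1⋯σ_{k-2})⋯(σ_1σ_2)σ_1` of `B⁺_k`,
viewed inside `B n`. -/
def delta (n k : ℕ) : B n :=
  ((List.range (k - 1)).reverse.map
    (fun j => ((List.range' 1 (j + 1)).map (gen n)).prod)).prod

/-- The `k`-th power of the flip automorphism `φ_n` of `B n`:
conjugation by `Δ_n^k`. -/
def flip (n k : ℕ) (x : B n) : B n := delta n n ^ k * x * (delta n n ^ k)⁻¹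

/-- The set `φ_n^k(B⁺_{n-1})` inside `B n`. -/
def flipSet (n k : ℕ) : Set (B n) := flip n k '' (Bplus n (n - 1) : Set (B n))

/-- `δ` is the maximal right divisor of `β` lying in the set `X`:
`δ ∈ X`, `δ` right-divides `β`, and every right divisor of `β` lying in `X`
right-divides `δ`. -/
def IsMaxRDivIn (n : ℕ) (X : Set (B n)) (β δ : B n) : Prop :=
  δ ∈ X ∧ RDiv n δ β ∧ ∀ γ ∈ X, RDiv n γ β → RDiv n γ δ

/-- The product `φ_n^{d-1}(b d) ⋯ φ_n^{k-1}(b k)` (factors in decreasing order of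
the index, from `d` down to `k`). -/
def tailProd (n : ℕ) (b : ℕ → B n) (k d : ℕ) : B n :=
  ((List.range' k (d + 1 - k)).reverse.map (fun l => flip n (l - 1) (b l))).prod

/-- `(b d, …, b 1)` is the `φ_n`-splitting of `β`: each `b k` lies in `B⁺_{n-1}`,
`b d ≠ 1`, `β = φ_n^{d-1}(b d) ⋯ φ_n(b 2) (b 1)`, and for each `k`, the element
`φ_n^{k-1}(b k)` is the maximal right divisor of `φ_n^{d-1}(b d) ⋯ φ_n^{k-1}(b k)`
lying in `φ_n^{k-1}(B⁺_{n-1})`. -/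
def IsSplitting (n d : ℕ) (b : ℕ → B n) (β : B n) : Prop :=
  1 ≤ d ∧ (∀ k, 1 ≤ k → k ≤ d → b k ∈ Bplus n (n - 1)) ∧ b d ≠ 1 ∧
  β = tailProd n b 1 d ∧
  ∀ k, 1 ≤ k → k ≤ d →
    IsMaxRDivIn n (flipSet n (k - 1)) (tailProd n b k d) (flip n (k - 1) (b k))

/-- Evaluation of a word over the letters `σ_i^{±1}` in `B n`: the letter `(i, true)`
stands for `σ_i` and `(i, false)` for `σ_i⁻¹`. -/
def evalWord (n : ℕ) (w : List (ℕ × Bool)) : B n :=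
  (w.map (fun p => if p.2 then gen n p.1 else (gen n p.1)⁻¹)).prod

/-- A word over the letters `σ_j^{±1}` is `σ_i`-positive: it contains at least one
letter `σ_i`, no letter `σ_i⁻¹` and no letter `σ_j^{±1}` with `j > i`. -/
def SigmaPos (i : ℕ) (w : List (ℕ × Bool)) : Prop :=
  (i, true) ∈ w ∧ (i, false) ∉ w ∧ ∀ p ∈ w, 1 ≤ p.1 ∧ p.1 ≤ i

/-- A word over the letters `σ_j^{±1}` is `σ_i`-negative: it contains at least one
letter `σ_i⁻¹`, no letter `σ_i` and no letter `σ_j^{±1}` with `j > i`. -/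
def SigmaNeg (i : ℕ) (w : List (ℕ × Bool)) : Prop :=
  (i, false) ∈ w ∧ (i, true) ∉ w ∧ ∀ p ∈ w, 1 ≤ p.1 ∧ p.1 ≤ i

/-- The Dehornoy ordering on `B n`: `β < γ` iff `β⁻¹γ` is represented by a
`σ_i`-positive word for some `i ≤ n-1`. -/
def dlt (n : ℕ) (β γ : B n) : Prop :=
  ∃ i w, i + 1 ≤ n ∧ SigmaPos i w ∧ evalWord n w = β⁻¹ * γ

/-- The nonstrict Dehornoy ordering. -/
def dle (n : ℕ) (β γ : B n) : Prop := dlt n β γ ∨ β = γ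

/-- The minimal length of a word over `σ_1^{±1}, …, σ_{n-1}^{±1}` representing `β`. -/
noncomputable def normSigma (n : ℕ) (β : B n) : ℕ :=
  sInf {l | ∃ w : List (ℕ × Bool), (∀ p ∈ w, 1 ≤ p.1 ∧ p.1 ≤ n - 1) ∧
    evalWord n w = β ∧ w.length = l}

/-- The (common) length of the positive words over `σ_1, …, σ_{n-1}` representing a
positive braid `β`. -/
noncomputable def posLen (n : ℕ) (β : B n) : ℕ :=
  sInf {l | ∃ w : List (ℕ × Bool), (∀ p ∈ w, 1 ≤ p.1 ∧ p.1 ≤ n - 1 ∧ p.2 = true) ∧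
    evalWord n w = β ∧ w.length = l}

/-- The Birman–Ko–Lee generator `a_{p,q} = σ_p ⋯ σ_{q-2} σ_{q-1} σ_{q-2}⁻¹ ⋯ σ_p⁻¹`
of `B n`. -/
def bkl (n p q : ℕ) : B n :=
  ((List.range' p (q - 1 - p)).map (gen n)).prod * gen n (q - 1) *
    (((List.range' p (q - 1 - p)).map (gen n)).prod)⁻¹

/-- The dual braid monoid `B⁺*_n`: the submonoid of `B n` generated by the
Birman–Ko–Lee generators. -/
def DualBplus (n : ℕ) : Submonoid (B n) :=
  Submonoid.closure {x | ∃ p q, 1 ≤ p ∧ p < q ∧ q ≤ n ∧ x = bkl n p q}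

/-- Evaluation in `B n` of a word over the letters `a_{p,q}^{±1}`. -/
def evalDual (n : ℕ) (w : List ((ℕ × ℕ) × Bool)) : B n :=
  (w.map (fun l => if l.2 then bkl n l.1.1 l.1.2 else (bkl n l.1.1 l.1.2)⁻¹)).prod

/-- The minimal length of a word over the letters `a_{p,q}^{±1}` (`1 ≤ p < q ≤ n`)
representing `β`. -/
noncomputable def normDual (n : ℕ) (β : B n) : ℕ :=
  sInf {l | ∃ w : List ((ℕ × ℕ) × Bool),
    (∀ p ∈ w, 1 ≤ p.1.1 ∧ p.1.1 < p.1.2 ∧ p.1.2 ≤ n) ∧ evalDual n w = β ∧ w.length = l}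

lemma rel_one {m : ℕ} {r : FreeGroup (Fin m)} (h : r ∈ braidRels m) :
    PresentedGroup.mk (braidRels m) r = 1 :=
  (QuotientGroup.eq_one_iff r).mpr (Subgroup.subset_normalClosure h)

lemma gen_of {n : ℕ} {i : ℕ} (h1 : 1 ≤ i) (h2 : i ≤ n - 1) :
    gen n i = PresentedGroup.of (⟨i - 1, by omega⟩ : Fin (n - 1)) := by
  rw [gen, dif_pos]

lemma gen_comm {n i j : ℕ} (hi : 1 ≤ i) (hij : i + 2 ≤ j) :
    gen n i * gen n j = gen n j * gen n i := by
  by_cases hj : j ≤ n - 1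
  · by_cases hi2 : i ≤ n - 1
    · rw [gen_of hi hi2, gen_of (by omega) hj]
      set a : Fin (n-1) := ⟨i - 1, by omega⟩
      set b : Fin (n-1) := ⟨j - 1, by omega⟩
      have hr : (FreeGroup.of a * FreeGroup.of b * (FreeGroup.of a)⁻¹ * (FreeGroup.of b)⁻¹)
          ∈ braidRels (n-1) := ⟨a, b, Or.inl ⟨by simp [a, b]; omega, rfl⟩⟩
      have := rel_one hr
      have h2 : PresentedGroup.of (rels := braidRels (n-1)) a * PresentedGroup.of b *
          (PresentedGroup.of a)⁻¹ * (PresentedGroup.of b)⁻¹ = 1 := by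
        simpa [PresentedGroup.of, map_mul, map_inv] using this
      rw [mul_inv_eq_one, mul_inv_eq_iff_eq_mul] at h2
      exact h2
    · have : gen n i = 1 := by rw [gen, dif_neg]; omega
      rw [this, one_mul, mul_one]
  · have : gen n j = 1 := by rw [gen, dif_neg]; omega
    rw [this, one_mul, mul_one]

lemma gen_commute {n i j : ℕ} (hi : 1 ≤ i) (hij : i + 2 ≤ j) :
    Commute (gen n i) (gen n j) := gen_comm hi hij

lemma gen_braid {n i : ℕ} (h1 : 1 ≤ i) (h2 : i + 1 ≤ n - 1) :
    gen n i * gen n (i+1) * gen n i = gen n (i+1) * gen n i * gen n (i+1) := by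
  rw [gen_of h1 (by omega), gen_of (by omega) h2]
  set a : Fin (n-1) := ⟨i - 1, by omega⟩
  set b : Fin (n-1) := ⟨i + 1 - 1, by omega⟩
  have hr : (FreeGroup.of a * FreeGroup.of b * FreeGroup.of a *
      (FreeGroup.of b)⁻¹ * (FreeGroup.of a)⁻¹ * (FreeGroup.of b)⁻¹) ∈ braidRels (n-1) :=
    ⟨a, b, Or.inr ⟨by simp [a, b]; omega, rfl⟩⟩
  have := rel_one hr
  have h2 : PresentedGroup.of (rels := braidRels (n-1)) a * PresentedGroup.of b *
      PresentedGroup.of a * (PresentedGroup.of b)⁻¹ * (PresentedGroup.of a)⁻¹ *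
      (PresentedGroup.of b)⁻¹ = 1 := by
    simpa [PresentedGroup.of, map_mul, map_inv] using this
  rw [mul_inv_eq_one, mul_inv_eq_iff_eq_mul, mul_inv_eq_iff_eq_mul] at h2
  exact h2

/-! ### The elements `C_k` and `D_k` -/

def Cc (n k : ℕ) : B n := ((List.range' 1 k).map (gen n)).prod

def Dd (n k : ℕ) : B n := ((List.range' 1 k).reverse.map (gen n)).prod

lemma Cc_zero (n : ℕ) : Cc n 0 = 1 := rfl

lemma Dd_zero (n : ℕ) : Dd n 0 = 1 := rfl

lemma Cc_succ (n k : ℕ) : Cc n (k+1) = Cc n k * gen n (k+1) := by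
  rw [Cc, Cc, List.range'_1_concat, List.map_append, List.prod_append]
  simp [Nat.add_comm]

lemma Dd_succ (n k : ℕ) : Dd n (k+1) = gen n (k+1) * Dd n k := by
  rw [Dd, Dd, List.range'_1_concat, List.reverse_append, List.map_append, List.prod_append]
  simp [Nat.add_comm]

lemma delta_succ (n k : ℕ) : delta n (k+1) = Cc n k * delta n k := by
  cases k with
  | zero => simp [delta, Cc_zero]
  | succ m =>
    rw [delta, delta]
    simp only [Nat.add_sub_cancel, List.range_succ, List.reverse_append, List.reverse_cons,
      List.reverse_nil, List.nil_append, List.cons_append, List.map_cons, List.prod_cons]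
    rfl

lemma commute_Cc {n k m : ℕ} (h : k + 2 ≤ m) : Commute (Cc n k) (gen n m) := by
  induction k with
  | zero => exact Commute.one_left _
  | succ l IH =>
    rw [Cc_succ]
    exact Commute.mul_left (IH (by omega)) (gen_commute (by omega) (by omega))

lemma commute_Dd {n k m : ℕ} (h : k + 2 ≤ m) : Commute (Dd n k) (gen n m) := by
  induction k with
  | zero => exact Commute.one_left _
  | succ l IH =>
    rw [Dd_succ]
    exact Commute.mul_left (gen_commute (by omega) (by omega)) (IH (by omega))

lemma commute_delta {n k m : ℕ} (h : k + 1 ≤ m) : Commute (delta n k) (gen n m) := by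
  induction k with
  | zero =>
    have : delta n 0 = 1 := rfl
    rw [this]; exact Commute.one_left _
  | succ l IH =>
    rw [delta_succ]
    exact Commute.mul_left (commute_Cc (by omega)) (IH (by omega))

/-! ### Key commutation identities -/

lemma Cc_gen {n : ℕ} : ∀ k j, k + 1 ≤ n → 1 ≤ j → j < k →
    Cc n k * gen n j = gen n (j+1) * Cc n k := by
  intro k
  induction k using Nat.strong_induction_on with
  | _ k IH =>
    intro j hk hj hjk
    rcases Nat.lt_or_ge (j+1) k with hm | hm
    · obtain ⟨m, rfl⟩ : ∃ m, k = m + 1 := ⟨k - 1, by omega⟩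
      rw [Cc_succ, mul_assoc, ← gen_comm hj (by omega), ← mul_assoc,
        IH m (by omega) j (by omega) hj (by omega), mul_assoc]
    · obtain ⟨l, rfl⟩ : ∃ l, j = l + 1 := ⟨j - 1, by omega⟩
      have hkk : k = l + 1 + 1 := by omega
      subst hkk
      have hb := gen_braid (n := n) (i := l+1) (by omega) (by omega)
      have hc := (commute_Cc (n := n) (k := l) (m := l+1+1) (by omega)).eq
      calc Cc n (l+1+1) * gen n (l+1)
          = Cc n l * (gen n (l+1) * gen n (l+1+1) * gen n (l+1)) := by
            rw [Cc_succ, Cc_succ]; group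
        _ = Cc n l * (gen n (l+1+1) * gen n (l+1) * gen n (l+1+1)) := by rw [hb]
        _ = (Cc n l * gen n (l+1+1)) * (gen n (l+1) * gen n (l+1+1)) := by group
        _ = (gen n (l+1+1) * Cc n l) * (gen n (l+1) * gen n (l+1+1)) := by rw [hc]
        _ = gen n (l+1+1) * Cc n (l+1+1) := by rw [Cc_succ, Cc_succ]; group

lemma Dd_gen {n : ℕ} : ∀ k j, k + 1 ≤ n → 1 ≤ j → j + 1 ≤ k →
    Dd n k * gen n (j+1) = gen n j * Dd n k := by
  intro k
  induction k using Nat.strong_induction_on with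
  | _ k IH =>
    intro j hk hj hjk
    rcases Nat.lt_or_ge (j+1) k with hm | hm
    · obtain ⟨m, rfl⟩ : ∃ m, k = m + 1 := ⟨k - 1, by omega⟩
      rw [Dd_succ, mul_assoc, IH m (by omega) j (by omega) (by omega) (by omega), ← mul_assoc,
        ← gen_comm hj (by omega), mul_assoc]
    · obtain ⟨l, rfl⟩ : ∃ l, j = l + 1 := ⟨j - 1, by omega⟩
      have hkk : k = l + 1 + 1 := by omega
      subst hkk
      have hb := gen_braid (n := n) (i := l+1) (by omega) (by omega)
      have hc := (commute_Dd (n := n) (k := l) (m := l+1+1) (by omega)).eq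
      calc Dd n (l+1+1) * gen n (l+1+1)
          = gen n (l+1+1) * gen n (l+1) * (Dd n l * gen n (l+1+1)) := by
            rw [Dd_succ, Dd_succ]; group
        _ = gen n (l+1+1) * gen n (l+1) * (gen n (l+1+1) * Dd n l) := by rw [hc]
        _ = (gen n (l+1+1) * gen n (l+1) * gen n (l+1+1)) * Dd n l := by group
        _ = (gen n (l+1) * gen n (l+1+1) * gen n (l+1)) * Dd n l := by rw [← hb]
        _ = gen n (l+1) * Dd n (l+1+1) := by rw [Dd_succ, Dd_succ]; group

lemma delta_Dd {n : ℕ} : ∀ k, k + 1 ≤ n → delta n (k+1) = delta n k * Dd n k := by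
  intro k
  induction k using Nat.strong_induction_on with
  | _ k IH =>
    intro hk
    match k with
    | 0 => simp [delta_succ, Cc_zero, Dd_zero]
    | 1 =>
      rw [delta_succ, delta_succ, Cc_succ, Cc_zero, Dd_succ, Dd_zero]
      have h0 : delta n 0 = 1 := rfl
      rw [h0]; group
    | (m+2) =>
      have hc := (commute_delta (n := n) (k := m+1) (m := m+2) (by omega)).symm.eq
      calc delta n (m+2+1)
          = Cc n (m+1) * gen n (m+2) * (delta n (m+1) * Dd n (m+1)) := by
            rw [delta_succ, Cc_succ, IH (m+1) (by omega) (by omega)]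
        _ = Cc n (m+1) * (gen n (m+2) * delta n (m+1)) * Dd n (m+1) := by group
        _ = Cc n (m+1) * (delta n (m+1) * gen n (m+2)) * Dd n (m+1) := by rw [hc]
        _ = (Cc n (m+1) * delta n (m+1)) * (gen n (m+2) * Dd n (m+1)) := by group
        _ = delta n (m+2) * Dd n (m+2) := by rw [← delta_succ, ← Dd_succ]

lemma delta_gen {n : ℕ} : ∀ k j, k ≤ n → 2 ≤ k → 1 ≤ j → j + 1 ≤ k →
    delta n k * gen n j = gen n (k-j) * delta n k := by
  intro k
  induction k using Nat.strong_induction_on with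
  | _ k IH =>
    intro j hk h2 hj hjk
    match k, h2 with
    | 2, _ =>
      have hj1 : j = 1 := by omega
      subst hj1
      have hd : delta n 2 = gen n 1 := by
        rw [delta_succ]
        have h0 : delta n 1 = 1 := by simp [delta]
        rw [h0, Cc_succ, Cc_zero, one_mul, mul_one]
      rw [hd]
    | (m+3), _ =>
      rcases Nat.eq_or_lt_of_le hj with h1 | h1
      · -- j = 1
        rw [← h1, show m+3-1 = m+2 by omega]
        have e1 : delta n (m+2) * gen n 1 = gen n (m+1) * delta n (m+2) := by
          have := IH (m+2) (by omega) 1 (by omega) (by omega) (by omega) (by omega)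
          rwa [show m+2-1 = m+1 by omega] at this
        have e2 : Cc n (m+2) * gen n (m+1) = gen n (m+2) * Cc n (m+2) :=
          Cc_gen (m+2) (m+1) (by omega) (by omega) (by omega)
        calc delta n (m+3) * gen n 1
            = Cc n (m+2) * (delta n (m+2) * gen n 1) := by
              rw [show m+3 = m+2+1 by omega, delta_succ]; group
          _ = (Cc n (m+2) * gen n (m+1)) * delta n (m+2) := by rw [e1]; group
          _ = gen n (m+2) * (Cc n (m+2) * delta n (m+2)) := by rw [e2]; group
          _ = gen n (m+2) * delta n (m+3) := by
              conv_rhs => rw [show m+3 = m+2+1 by omega, delta_succ]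
      · -- 2 ≤ j
        obtain ⟨i, rfl⟩ : ∃ i, j = i + 1 := ⟨j - 1, by omega⟩
        rw [show m+3-(i+1) = m+2-i by omega]
        have e1 : Dd n (m+2) * gen n (i+1) = gen n i * Dd n (m+2) :=
          Dd_gen (m+2) i (by omega) (by omega) (by omega)
        have e2 : delta n (m+2) * gen n i = gen n (m+2-i) * delta n (m+2) :=
          IH (m+2) (by omega) i (by omega) (by omega) (by omega) (by omega)
        calc delta n (m+3) * gen n (i+1)
            = delta n (m+2) * (Dd n (m+2) * gen n (i+1)) := by
              rw [show m+3 = m+2+1 by omega, delta_Dd (m+2) (by omega)]; group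
          _ = (delta n (m+2) * gen n i) * Dd n (m+2) := by rw [e1]; group
          _ = gen n (m+2-i) * (delta n (m+2) * Dd n (m+2)) := by rw [e2]; group
          _ = gen n (m+2-i) * delta n (m+3) := by
              conv_rhs => rw [show m+3 = m+2+1 by omega, delta_Dd (m+2) (by omega)]



/-! ### Membership lemmas -/

lemma gen_mem {n i : ℕ} (h1 : 1 ≤ i) (h2 : i + 1 ≤ n) : gen n i ∈ Bplus n n :=
  Submonoid.subset_closure ⟨i, h1, h2, rfl⟩

lemma Cc_mem {n : ℕ} : ∀ k, k + 1 ≤ n → Cc n k ∈ Bplus n n := by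
  intro k
  induction k with
  | zero => intro _; exact one_mem _
  | succ l IH =>
    intro h
    rw [Cc_succ]
    exact mul_mem (IH (by omega)) (gen_mem (by omega) (by omega))

lemma delta_mem {n : ℕ} : ∀ k, k ≤ n → delta n k ∈ Bplus n n := by
  intro k
  induction k with
  | zero => intro _; exact one_mem _
  | succ l IH =>
    intro h
    rw [delta_succ]
    exact mul_mem (Cc_mem l (by omega)) (IH (by omega))

lemma delta_two {n : ℕ} : delta n 2 = gen n 1 := by
  rw [delta_succ]
  have h0 : delta n 1 = 1 := by simp [delta]
  rw [h0, Cc_succ, Cc_zero, one_mul, mul_one]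

/-! ### Left divisibility of `Δ` by the generators -/

lemma Cc_inv {n : ℕ} : ∀ k j, k + 1 ≤ n → 1 ≤ j → j + 1 ≤ k →
    (gen n (j+1))⁻¹ * Cc n k = Cc n k * (gen n j)⁻¹ := by
  intro k
  induction k using Nat.strong_induction_on with
  | _ k IH =>
    intro j hk hj hjk
    rcases Nat.lt_or_ge (j+1) k with hm | hm
    · obtain ⟨m, rfl⟩ : ∃ m, k = m + 1 := ⟨k - 1, by omega⟩
      calc (gen n (j+1))⁻¹ * Cc n (m+1)
          = (gen n (j+1))⁻¹ * Cc n m * gen n (m+1) := by rw [Cc_succ]; group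
        _ = Cc n m * (gen n j)⁻¹ * gen n (m+1) := by
            rw [IH m (by omega) j (by omega) hj (by omega)]
        _ = Cc n (m+1) * (gen n j)⁻¹ := by
            rw [mul_assoc, (gen_commute (n := n) (i := j) (j := m+1) hj
              (by omega)).inv_left.eq, Cc_succ]; group
    · obtain ⟨l, rfl⟩ : ∃ l, j = l + 1 := ⟨j - 1, by omega⟩
      have hkk : k = l + 1 + 1 := by omega
      subst hkk
      have hb := gen_braid (n := n) (i := l+1) (by omega) (by omega)
      have hkey := congrArg
        (fun x => (gen n (l+1+1))⁻¹ * x * (gen n (l+1))⁻¹) hb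
      simp only [mul_assoc, mul_inv_cancel, mul_one, inv_mul_cancel_left] at hkey
      have hinv : (gen n (l+1+1))⁻¹ * Cc n l = Cc n l * (gen n (l+1+1))⁻¹ :=
        ((commute_Cc (n := n) (k := l) (m := l+1+1) (by omega)).inv_right).symm.eq
      calc (gen n (l+1+1))⁻¹ * Cc n (l+1+1)
          = ((gen n (l+1+1))⁻¹ * Cc n l) * (gen n (l+1) * gen n (l+1+1)) := by
            rw [Cc_succ, Cc_succ]; group
        _ = Cc n l * ((gen n (l+1+1))⁻¹ * (gen n (l+1) * gen n (l+1+1))) := by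
            rw [hinv]; group
        _ = Cc n l * (gen n (l+1) * (gen n (l+1+1) * (gen n (l+1))⁻¹)) := by
            rw [hkey]
        _ = Cc n (l+1+1) * (gen n (l+1))⁻¹ := by rw [Cc_succ, Cc_succ]; group

lemma one_inv_Cc {n : ℕ} : ∀ k, 1 ≤ k → k + 1 ≤ n → (gen n 1)⁻¹ * Cc n k ∈ Bplus n n := by
  intro k
  induction k with
  | zero => omega
  | succ l IH =>
    intro _ h
    rcases Nat.eq_or_lt_of_le (show 1 ≤ l + 1 by omega) with h1 | h1
    · rw [← h1]
      have : Cc n 1 = gen n 1 := by rw [Cc_succ, Cc_zero, one_mul]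
      rw [this, inv_mul_cancel]
      exact one_mem _
    · rw [Cc_succ, ← mul_assoc]
      exact mul_mem (IH (by omega) (by omega)) (gen_mem (by omega) (by omega))

lemma sigma_inv_delta {n : ℕ} : ∀ k i, k ≤ n → 2 ≤ k → 1 ≤ i → i + 1 ≤ k →
    (gen n i)⁻¹ * delta n k ∈ Bplus n n := by
  intro k
  induction k using Nat.strong_induction_on with
  | _ k IH =>
    intro i hk h2 hi hik
    match k, h2 with
    | 2, _ =>
      have hi1 : i = 1 := by omega
      subst hi1
      rw [delta_two, inv_mul_cancel]
      exact one_mem _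
    | (m+3), _ =>
      rcases Nat.eq_or_lt_of_le hi with h1 | h1
      · rw [← h1, show m+3 = m+2+1 by omega, delta_succ, ← mul_assoc]
        exact mul_mem (one_inv_Cc (m+2) (by omega) (by omega)) (delta_mem (m+2) (by omega))
      · obtain ⟨j, rfl⟩ : ∃ j, i = j + 1 := ⟨i - 1, by omega⟩
        rw [show m+3 = m+2+1 by omega, delta_succ, ← mul_assoc,
          Cc_inv (m+2) j (by omega) (by omega) (by omega), mul_assoc]
        exact mul_mem (Cc_mem (m+2) (by omega))
          (IH (m+2) (by omega) j (by omega) (by omega) (by omega) (by omega))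

lemma delta_inv_gen {n : ℕ} (hn : 2 ≤ n) {i : ℕ} (h1 : 1 ≤ i) (h2 : i + 1 ≤ n) :
    delta n n * (gen n i)⁻¹ ∈ Bplus n n := by
  have e := delta_gen (n := n) n i le_rfl hn h1 h2
  have e2 : delta n n * (gen n i)⁻¹ = (gen n (n-i))⁻¹ * delta n n := by
    have := congrArg (fun z => (gen n (n-i))⁻¹ * z * (gen n i)⁻¹) e
    simp only [mul_assoc, mul_inv_cancel, mul_one, inv_mul_cancel_left] at this
    exact this.symm
  rw [e2]
  exact sigma_inv_delta n (n-i) le_rfl hn (by omega) (by omega)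

/-! ### The flip automorphism is positivity preserving -/

lemma flip_pos {n : ℕ} (hn : 2 ≤ n) {x : B n} (hx : x ∈ Bplus n n) :
    delta n n * x * (delta n n)⁻¹ ∈ Bplus n n := by
  induction hx using Submonoid.closure_induction with
  | mem y hy =>
    obtain ⟨i, h1, h2, rfl⟩ := hy
    rw [delta_gen (n := n) n i le_rfl hn h1 h2, mul_inv_cancel_right]
    exact gen_mem (by omega) (by omega)
  | one => simpa using one_mem _
  | mul y z _ _ hy hz =>
    have : delta n n * (y * z) * (delta n n)⁻¹ =
        (delta n n * y * (delta n n)⁻¹) * (delta n n * z * (delta n n)⁻¹) := by group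
    rw [this]
    exact mul_mem hy hz

lemma flip_pow_pos {n : ℕ} (hn : 2 ≤ n) (t : ℕ) {x : B n} (hx : x ∈ Bplus n n) :
    delta n n ^ t * x * (delta n n ^ t)⁻¹ ∈ Bplus n n := by
  induction t with
  | zero => simpa using hx
  | succ s IH =>
    have : delta n n ^ (s+1) * x * (delta n n ^ (s+1))⁻¹ =
        delta n n * (delta n n ^ s * x * (delta n n ^ s)⁻¹) * (delta n n)⁻¹ := by
      rw [pow_succ']; group
    rw [this]
    exact flip_pos hn IH

/-! ### Every braid becomes positive after multiplying by a power of `Δ` -/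

lemma inv_pos_aux {n : ℕ} (hn : 2 ≤ n) {u : B n} (hu : u ∈ Bplus n n) :
    ∃ s, delta n n ^ s * u⁻¹ ∈ Bplus n n := by
  induction hu using Submonoid.closure_induction with
  | mem y hy =>
    obtain ⟨i, h1, h2, rfl⟩ := hy
    exact ⟨1, by rw [pow_one]; exact delta_inv_gen hn h1 h2⟩
  | one => exact ⟨0, by simpa using one_mem _⟩
  | mul y z _ _ hy hz =>
    obtain ⟨sy, hsy⟩ := hy
    obtain ⟨sz, hsz⟩ := hz
    refine ⟨sy + sz, ?_⟩
    have : delta n n ^ (sy + sz) * (y * z)⁻¹ =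
        (delta n n ^ sy * (delta n n ^ sz * z⁻¹) * (delta n n ^ sy)⁻¹) *
          (delta n n ^ sy * y⁻¹) := by
      rw [pow_add]; group
    rw [this]
    exact mul_mem (flip_pow_pos hn sy hsz) hsy

lemma exists_pow {n : ℕ} (hn : 2 ≤ n) (β : B n) :
    ∃ t, delta n n ^ t * β ∈ Bplus n n := by
  have htop : β ∈ Subgroup.closure
      (Set.range (PresentedGroup.of : Fin (n-1) → B n)) := by
    rw [PresentedGroup.closure_range_of]; trivial
  induction htop using Subgroup.closure_induction with
  | mem y hy =>
    obtain ⟨a, rfl⟩ := hy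
    refine ⟨0, ?_⟩
    rw [pow_zero, one_mul]
    have ha : PresentedGroup.of (rels := braidRels (n-1)) a = gen n ((a : ℕ) + 1) := by
      rw [gen_of (by omega) (by omega : (a : ℕ) + 1 ≤ n - 1)]
      congr 1
    rw [ha]
    exact gen_mem (by omega) (by omega)
  | one => exact ⟨0, by simpa using one_mem _⟩
  | mul y z _ _ hy hz =>
    obtain ⟨ty, hty⟩ := hy
    obtain ⟨tz, htz⟩ := hz
    refine ⟨tz + ty, ?_⟩
    have : delta n n ^ (tz + ty) * (y * z) =
        (delta n n ^ tz * (delta n n ^ ty * y) * (delta n n ^ tz)⁻¹) *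
          (delta n n ^ tz * z) := by
      rw [pow_add]; group
    rw [this]
    exact mul_mem (flip_pow_pos hn tz hty) htz
  | inv y _ hy =>
    obtain ⟨t, ht⟩ := hy
    obtain ⟨s, hs⟩ := inv_pos_aux hn ht
    refine ⟨s, ?_⟩
    have : delta n n ^ s * y⁻¹ =
        (delta n n ^ s * (delta n n ^ t * y)⁻¹) * delta n n ^ t := by group
    rw [this]
    exact mul_mem hs (pow_mem (delta_mem n le_rfl) t)


/-- Every `β ∈ B_n` admits a unique decomposition `β = Δ_n^{-t} β'` with
`t ∈ ℕ`, `β' ∈ B⁺_n`, and `β'` not left divisible by `Δ_n` unless `t = 0`. -/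
theorem garside_quotient_exists_unique (n : ℕ) (hn : 2 ≤ n) (β : B n) :
    ∃! p : ℕ × B n, p.2 ∈ Bplus n n ∧ β = (delta n n ^ p.1)⁻¹ * p.2 ∧
      (p.1 ≠ 0 → ¬ LDiv n (delta n n) p.2) := by
  have hne : {t | delta n n ^ t * β ∈ Bplus n n}.Nonempty := exists_pow hn β
  set T := {t | delta n n ^ t * β ∈ Bplus n n} with hT
  set t₀ := sInf T with ht₀def
  have ht₀ : delta n n ^ t₀ * β ∈ Bplus n n := Nat.sInf_mem hne
  refine ⟨(t₀, delta n n ^ t₀ * β), ⟨ht₀, by group, ?_⟩, ?_⟩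
  · intro h0 hdiv
    have e : (delta n n)⁻¹ * (delta n n ^ t₀ * β) = delta n n ^ (t₀ - 1) * β := by
      conv_lhs => rw [show t₀ = t₀ - 1 + 1 by omega, pow_succ']
      group
    have hdiv' : delta n n ^ (t₀ - 1) * β ∈ Bplus n n := by
      rw [← e]; exact hdiv
    have := Nat.sInf_le (show t₀ - 1 ∈ T from hdiv')
    omega
  · rintro ⟨s, y⟩ ⟨hy, heq, hcond⟩
    dsimp only at hy heq hcond ⊢
    have hy' : y = delta n n ^ s * β := by rw [heq]; group
    have hsT : s ∈ T := by
      show delta n n ^ s * β ∈ Bplus n n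
      rw [← hy']; exact hy
    have hle : t₀ ≤ s := Nat.sInf_le hsT
    have hst : s = t₀ := by
      by_contra hne'
      have hlt : t₀ < s := by omega
      have e2 : (delta n n)⁻¹ * y = delta n n ^ (s-1) * β := by
        conv_lhs => rw [hy', show s = s-1+1 by omega, pow_succ']
        group
      have e3 : delta n n ^ (s-1) * β ∈ Bplus n n := by
        have e4 : delta n n ^ (s-1) * β = delta n n ^ (s-1-t₀) * (delta n n ^ t₀ * β) := by
          rw [← mul_assoc, ← pow_add]
          congr 2
          omega
        rw [e4]
        exact mul_mem (pow_mem (delta_mem n le_rfl) _) ht₀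
      exact (hcond (by omega)) (by show (delta n n)⁻¹ * y ∈ Bplus n n; rw [e2]; exact e3)
    subst hst
    rw [Prod.mk.injEq]
    exact ⟨rfl, hy'⟩


end Braid
end

section
/- Every braid β ∈ B_n admits a unique decomposition β = β'⁻¹β'' with β', β'' ∈ B⁺_n such that the left gcd of β' and β'' is trivial, i.e., the only element of B⁺_n left dividing both β' and β'' is 1. -/
namespace BraidWord

/-- Words over the (0-indexed) Artin generators. -/
abbrev W := List ℕ

def Far (a b : ℕ) : Prop := a + 2 ≤ b ∨ b + 2 ≤ a

instance : DecidablePred (fun p : ℕ × ℕ => Far p.1 p.2) := fun _ => instDecidableOr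
instance (a b : ℕ) : Decidable (Far a b) := instDecidableOr

def Adj (a b : ℕ) : Prop := b = a + 1 ∨ a = b + 1

theorem Far.symm {a b : ℕ} (h : Far a b) : Far b a := h.elim Or.inr Or.inl
theorem Adj.symm {a b : ℕ} (h : Adj a b) : Adj b a := h.elim Or.inr Or.inl
theorem Far.ne {a b : ℕ} (h : Far a b) : a ≠ b := by rcases h with h | h <;> omega
theorem Adj.ne {a b : ℕ} (h : Adj a b) : a ≠ b := by rcases h with h | h <;> omega
theorem far_or_adj {a b : ℕ} (h : a ≠ b) : Far a b ∨ Adj a b := by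
  unfold Far Adj; omega
theorem not_far_of_adj {a b : ℕ} (h : Adj a b) : ¬ Far a b := by
  rcases h with h | h <;> (unfold Far; omega)

/-- One elementary braid relation. -/
inductive Brel : W → W → Prop
  | far {a b : ℕ} : Far a b → Brel [a, b] [b, a]
  | adj {a b : ℕ} : Adj a b → Brel [a, b, a] [b, a, b]

theorem Brel.symm {u v : W} (h : Brel u v) : Brel v u := by
  cases h with
  | far h => exact Brel.far h.symm
  | adj h => exact Brel.adj h.symm

/-- One rewriting step: applying one braid relation somewhere in the word. -/
def Step (u v : W) : Prop := ∃ x l r y, Brel l r ∧ u = x ++ l ++ y ∧ v = x ++ r ++ y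

theorem Step.symm {u v : W} (h : Step u v) : Step v u := by
  obtain ⟨x, l, r, y, hb, hu, hv⟩ := h
  exact ⟨x, r, l, y, hb.symm, hv, hu⟩

/-- Positive equivalence of braid words. -/
def Eqv : W → W → Prop := Relation.ReflTransGen Step

infix:50 " ≋ " => Eqv

namespace Eqv

@[refl] theorem refl (u : W) : u ≋ u := Relation.ReflTransGen.refl

theorem rfl' {u : W} : u ≋ u := Relation.ReflTransGen.refl

theorem of_step {u v : W} (h : Step u v) : u ≋ v := Relation.ReflTransGen.single h

theorem trans {u v w : W} (h₁ : u ≋ v) (h₂ : v ≋ w) : u ≋ w :=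
  Relation.ReflTransGen.trans h₁ h₂

theorem symm {u v : W} (h : u ≋ v) : v ≋ u :=
  haveI : Std.Symm Step := ⟨fun _ _ hs => hs.symm⟩
  Relation.ReflTransGen.symmetric.symm _ _ h

end Eqv

theorem Step.append_left {u v : W} (c : W) (h : Step u v) : Step (c ++ u) (c ++ v) := by
  obtain ⟨x, l, r, y, hb, hu, hv⟩ := h
  exact ⟨c ++ x, l, r, y, hb, by simp [hu], by simp [hv]⟩

theorem Step.append_right {u v : W} (c : W) (h : Step u v) : Step (u ++ c) (v ++ c) := by
  obtain ⟨x, l, r, y, hb, hu, hv⟩ := h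
  exact ⟨x, l, r, y ++ c, hb, by simp [hu], by simp [hv]⟩

theorem Eqv.append_left {u v : W} (c : W) (h : u ≋ v) : c ++ u ≋ c ++ v := by
  induction h with
  | refl => rfl
  | tail _ hs ih => exact ih.trans (Eqv.of_step (hs.append_left c))

theorem Eqv.append_right {u v : W} (c : W) (h : u ≋ v) : u ++ c ≋ v ++ c := by
  induction h with
  | refl => rfl
  | tail _ hs ih => exact ih.trans (Eqv.of_step (hs.append_right c))

theorem Eqv.append {u v x y : W} (h₁ : u ≋ v) (h₂ : x ≋ y) : u ++ x ≋ v ++ y :=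
  (h₁.append_right x).trans (h₂.append_left v)

theorem Eqv.cons {u v : W} (a : ℕ) (h : u ≋ v) : a :: u ≋ a :: v :=
  h.append_left [a]

/-- Elementary swap at the head. -/
theorem swapE {a b : ℕ} (h : Far a b) (t : W) : a :: b :: t ≋ b :: a :: t :=
  Eqv.of_step ⟨[], [a, b], [b, a], t, Brel.far h, rfl, rfl⟩

/-- Elementary braid move at the head. -/
theorem braidE {a b : ℕ} (h : Adj a b) (t : W) : a :: b :: a :: t ≋ b :: a :: b :: t :=
  Eqv.of_step ⟨[], [a, b, a], [b, a, b], t, Brel.adj h, rfl, rfl⟩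

theorem Brel.length {u v : W} (h : Brel u v) : u.length = v.length := by
  cases h <;> rfl

theorem Step.length {u v : W} (h : Step u v) : u.length = v.length := by
  obtain ⟨x, l, r, y, hb, hu, hv⟩ := h
  simp [hu, hv, hb.length]

theorem Eqv.length {u v : W} (h : u ≋ v) : u.length = v.length := by
  induction h with
  | refl => rfl
  | tail _ hs ih => exact ih.trans hs.length

theorem Brel.mem {u v : W} (h : Brel u v) {x : ℕ} : x ∈ u ↔ x ∈ v := by
  cases h <;> simp <;> tauto

theorem Step.mem {u v : W} (h : Step u v) {x : ℕ} : x ∈ u ↔ x ∈ v := by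
  obtain ⟨c, l, r, y, hb, hu, hv⟩ := h
  simp [hu, hv, hb.mem]

theorem Eqv.mem {u v : W} (h : u ≋ v) {x : ℕ} : x ∈ u ↔ x ∈ v := by
  induction h with
  | refl => rfl
  | tail _ hs ih => exact ih.trans hs.mem

theorem Step.reverse {u v : W} (h : Step u v) : Step u.reverse v.reverse := by
  obtain ⟨x, l, r, y, hb, hu, hv⟩ := h
  refine ⟨y.reverse, l.reverse, r.reverse, x.reverse, ?_, by simp [hu], by simp [hv]⟩
  cases hb with
  | far h => exact Brel.far h.symm
  | adj h => exact Brel.adj h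

theorem Eqv.reverse {u v : W} (h : u ≋ v) : u.reverse ≋ v.reverse := by
  induction h with
  | refl => rfl
  | tail _ hs ih => exact ih.trans (Eqv.of_step hs.reverse)

/-- The complement: `a * C a b = b * C b a` is the lcm of distinct letters `a, b`. -/
def C (a b : ℕ) : W := if Far a b then [b] else [b, a]

theorem C_far {a b : ℕ} (h : Far a b) : C a b = [b] := if_pos h
theorem C_adj {a b : ℕ} (h : Adj a b) : C a b = [b, a] := if_neg (not_far_of_adj h)

/-- The fundamental local confluence: `a ⬝ C a b ≋ b ⬝ C b a`. -/
theorem lcm_swap {a b : ℕ} (h : a ≠ b) (t : W) :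
    a :: (C a b ++ t) ≋ b :: (C b a ++ t) := by
  rcases far_or_adj h with hf | ha
  · rw [C_far hf, C_far hf.symm]; exact swapE hf t
  · rw [C_adj ha, C_adj ha.symm]; exact braidE ha t

/-- Analysis of a rewriting step on a word with distinguished head letter. -/
theorem step_cons {a : ℕ} {u w : W} (h : Step (a :: u) w) :
    (∃ u', w = a :: u' ∧ Step u u') ∨
    (∃ c t, a ≠ c ∧ u = C a c ++ t ∧ w = c :: (C c a ++ t)) := by
  obtain ⟨x, l, r, y, hb, hu, hv⟩ := h
  cases x with
  | nil =>
    right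
    cases hb with
    | @far i j hf =>
      simp only [List.nil_append, List.cons_append, List.cons.injEq] at hu hv
      obtain ⟨rfl, rfl⟩ := hu
      exact ⟨j, y, hf.ne, by simp [C_far hf], by simp [hv, C_far hf.symm]⟩
    | @adj i j ha =>
      simp only [List.nil_append, List.cons_append, List.cons.injEq] at hu hv
      obtain ⟨rfl, rfl⟩ := hu
      exact ⟨j, y, ha.ne, by simp [C_adj ha], by simp [hv, C_adj ha.symm]⟩
  | cons a' x' =>
    left
    simp only [List.cons_append, List.cons.injEq] at hu
    obtain ⟨rfl, rfl⟩ := hu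
    exact ⟨x' ++ r ++ y, by simp [hv], ⟨x', l, r, y, hb, rfl, rfl⟩⟩



/-! ### The Garside key lemma -/

/-- Garside property at length `n`: left cancellation plus existence of
the conditional lcm of two distinct initial letters. -/
def GP (n : ℕ) : Prop := ∀ a b : ℕ, ∀ u v : W, (a :: u).length ≤ n → (a :: u) ≋ (b :: v) →
  ((a = b → u ≋ v) ∧ (a ≠ b → ∃ w, u ≋ C a b ++ w ∧ v ≋ C b a ++ w))

theorem cancel_one {N : ℕ} (K : GP N) {a : ℕ} {u v : W} (h : (a :: u) ≋ (a :: v))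
    (hl : u.length + 1 ≤ N) : u ≋ v :=
  (K a a u v (by simpa using hl) h).1 rfl

theorem key_of {N : ℕ} (K : GP N) {a b : ℕ} {u v : W} (hne : a ≠ b) (h : (a :: u) ≋ (b :: v))
    (hl : u.length + 1 ≤ N) : ∃ w, u ≋ C a b ++ w ∧ v ≋ C b a ++ w :=
  (K a b u v (by simpa using hl) h).2 hne

theorem cancel_pre {N : ℕ} (K : GP N) {p u v : W} (h : (p ++ u) ≋ (p ++ v))
    (hl : (p ++ u).length ≤ N) : u ≋ v := by
  induction p with
  | nil => simpa using h
  | cons a p ih =>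
    simp only [List.cons_append] at h hl
    have h' : (p ++ u) ≋ (p ++ v) := cancel_one K h (by simp at hl ⊢; omega)
    exact ih h' (by simp at hl ⊢; omega)

theorem cube_ff {N : ℕ} (K : GP N) {a b c : ℕ} (hab : a ≠ b) (hca : Far c a) (hcb : Far c b)
    {t s : W} (hyp : C c a ++ t ≋ C c b ++ s) (hl : (C c a ++ t).length ≤ N) :
    ∃ w, C a c ++ t ≋ C a b ++ w ∧ C b c ++ s ≋ C b a ++ w := by
  rw [C_far hca, C_far hcb] at hyp
  simp only [List.cons_append, List.nil_append] at hyp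
  rw [C_far hca] at hl
  simp only [List.cons_append, List.nil_append, List.length_cons] at hl
  obtain ⟨r, htr, hsr⟩ := key_of K hab hyp (by omega)
  rw [C_far hca.symm, C_far hcb.symm]
  simp only [List.cons_append, List.nil_append]
  rcases far_or_adj hab with hf | ha
  · rw [C_far hf] at htr ⊢; rw [C_far hf.symm] at hsr ⊢
    simp only [List.cons_append, List.nil_append] at htr hsr ⊢
    exact ⟨c :: r, (Eqv.cons c htr).trans (swapE hcb r),
      (Eqv.cons c hsr).trans (swapE hca r)⟩
  · rw [C_adj ha] at htr ⊢; rw [C_adj ha.symm] at hsr ⊢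
    simp only [List.cons_append, List.nil_append] at htr hsr ⊢
    exact ⟨c :: r,
      (Eqv.cons c htr).trans ((swapE hcb (a :: r)).trans (Eqv.cons b (swapE hca r))),
      (Eqv.cons c hsr).trans ((swapE hca (b :: r)).trans (Eqv.cons a (swapE hcb r)))⟩

theorem cube_ft {N : ℕ} (K : GP N) {a b c : ℕ} (hab : a ≠ b) (hca : Far c a) (hcb : Adj c b)
    {t s : W} (hyp : C c a ++ t ≋ C c b ++ s) (hl : (C c a ++ t).length ≤ N) :
    ∃ w, C a c ++ t ≋ C a b ++ w ∧ C b c ++ s ≋ C b a ++ w := by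
  rw [C_far hca, C_adj hcb] at hyp
  simp only [List.cons_append, List.nil_append] at hyp
  rw [C_far hca] at hl
  simp only [List.cons_append, List.nil_append, List.length_cons] at hl
  -- hyp : a :: t ≋ b :: c :: s
  have hls : s.length + 2 = t.length + 1 := by simpa using hyp.length.symm
  obtain ⟨r, htr, hsr⟩ := key_of K hab hyp (by omega)
  rw [C_far hca.symm, C_adj hcb.symm]
  simp only [List.cons_append, List.nil_append]
  rcases far_or_adj hab with hf | ha
  · -- FT1 : Far a b
    rw [C_far hf] at htr; rw [C_far hf.symm] at hsr
    simp only [List.cons_append, List.nil_append] at htr hsr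
    -- htr : t ≋ b :: r,  hsr : c :: s ≋ a :: r
    have hlr : r.length + 1 = t.length := by simpa using htr.length.symm
    obtain ⟨q, hsq, hrq⟩ := key_of K hca.ne hsr (by omega)
    rw [C_far hca] at hsq; rw [C_far hca.symm] at hrq
    simp only [List.cons_append, List.nil_append] at hsq hrq
    -- hsq : s ≋ a :: q, hrq : r ≋ c :: q
    rw [C_far hf, C_far hf.symm]
    simp only [List.cons_append, List.nil_append]
    refine ⟨c :: b :: q, ?_, ?_⟩
    · exact (Eqv.cons c htr).trans ((Eqv.cons c (Eqv.cons b hrq)).trans (braidE hcb q))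
    · exact (Eqv.cons c (Eqv.cons b hsq)).trans
        ((Eqv.cons c (swapE hf.symm q)).trans (swapE hca (b :: q)))
  · -- FT2 : Adj a b
    rw [C_adj ha] at htr; rw [C_adj ha.symm] at hsr
    simp only [List.cons_append, List.nil_append] at htr hsr
    -- htr : t ≋ b :: a :: r, hsr : c :: s ≋ a :: b :: r
    have hlr : r.length + 2 = t.length := by simpa using htr.length.symm
    obtain ⟨q, hsq, hbrq⟩ := key_of K hca.ne hsr (by omega)
    rw [C_far hca] at hsq; rw [C_far hca.symm] at hbrq
    simp only [List.cons_append, List.nil_append] at hsq hbrq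
    -- hsq : s ≋ a :: q, hbrq : b :: r ≋ c :: q
    obtain ⟨p, hrp, hqp⟩ := key_of K hcb.ne.symm hbrq (by omega)
    rw [C_adj hcb.symm] at hrp; rw [C_adj hcb] at hqp
    simp only [List.cons_append, List.nil_append] at hrp hqp
    -- hrp : r ≋ c :: b :: p, hqp : q ≋ b :: c :: p
    rw [C_adj ha, C_adj ha.symm]
    simp only [List.cons_append, List.nil_append]
    refine ⟨c :: b :: a :: p, ?_, ?_⟩
    · exact (Eqv.cons c htr).trans <|
        (Eqv.cons c (Eqv.cons b (Eqv.cons a hrp))).trans <|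
        (Eqv.cons c (Eqv.cons b (swapE hca.symm (b :: p)))).trans <|
        (braidE hcb (a :: b :: p)).trans <|
        (Eqv.cons b (Eqv.cons c (braidE ha.symm p))).trans
        (Eqv.cons b (swapE hca (b :: a :: p)))
    · exact (Eqv.cons c (Eqv.cons b hsq)).trans <|
        (Eqv.cons c (Eqv.cons b (Eqv.cons a hqp))).trans <|
        (Eqv.cons c (braidE ha.symm (c :: p))).trans <|
        (swapE hca (b :: a :: c :: p)).trans <|
        (Eqv.cons a (Eqv.cons c (Eqv.cons b (swapE hca.symm p)))).trans
        (Eqv.cons a (braidE hcb (a :: p)))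

theorem cube_tt {N : ℕ} (K : GP N) {a b c : ℕ} (hab : a ≠ b) (hca : Adj c a) (hcb : Adj c b)
    {t s : W} (hyp : C c a ++ t ≋ C c b ++ s) (hl : (C c a ++ t).length ≤ N) :
    ∃ w, C a c ++ t ≋ C a b ++ w ∧ C b c ++ s ≋ C b a ++ w := by
  have hfab : Far a b := by
    rcases hca with h1 | h1 <;> rcases hcb with h2 | h2 <;> (unfold Far; omega)
  rw [C_adj hca, C_adj hcb] at hyp
  simp only [List.cons_append, List.nil_append] at hyp
  rw [C_adj hca] at hl
  simp only [List.cons_append, List.nil_append, List.length_cons] at hl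
  -- hyp : a :: c :: t ≋ b :: c :: s
  have hl2 : t.length + 2 ≤ N := by omega
  have hlst : s.length = t.length := by
    have := hyp.length; simp only [List.length_cons] at this; omega
  obtain ⟨r, h1, h2⟩ := key_of K hab hyp (by simp only [List.length_cons]; omega)
  rw [C_far hfab] at h1; rw [C_far hfab.symm] at h2
  simp only [List.cons_append, List.nil_append] at h1 h2
  -- h1 : c :: t ≋ b :: r, h2 : c :: s ≋ a :: r
  have hlr : r.length = t.length := by
    have := h1.length; simp only [List.length_cons] at this; omega
  obtain ⟨q, htq, hrq⟩ := key_of K hcb.ne h1 (by omega)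
  rw [C_adj hcb] at htq; rw [C_adj hcb.symm] at hrq
  simp only [List.cons_append, List.nil_append] at htq hrq
  -- htq : t ≋ b :: c :: q, hrq : r ≋ c :: b :: q
  obtain ⟨p, hsp, hrp⟩ := key_of K hca.ne h2 (by omega)
  rw [C_adj hca] at hsp; rw [C_adj hca.symm] at hrp
  simp only [List.cons_append, List.nil_append] at hsp hrp
  -- hsp : s ≋ a :: c :: p, hrp : r ≋ c :: a :: p
  have hlq : q.length + 2 = r.length := by
    have := hrq.length; simp only [List.length_cons] at this; omega
  have hba : (b :: q) ≋ (a :: p) :=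
    cancel_one K (hrq.symm.trans hrp) (by simp only [List.length_cons]; omega)
  obtain ⟨e, hqe, hpe⟩ := key_of K (Ne.symm hab) hba (by omega)
  rw [C_far hfab.symm] at hqe; rw [C_far hfab] at hpe
  simp only [List.cons_append, List.nil_append] at hqe hpe
  -- hqe : q ≋ a :: e, hpe : p ≋ b :: e
  rw [C_adj hca.symm, C_adj hcb.symm, C_far hfab, C_far hfab.symm]
  simp only [List.cons_append, List.nil_append]
  refine ⟨c :: b :: a :: c :: e, ?_, ?_⟩
  · exact (Eqv.cons c (Eqv.cons a htq)).trans <|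
      (Eqv.cons c (Eqv.cons a (Eqv.cons b (Eqv.cons c hqe)))).trans <|
      (Eqv.cons c (swapE hfab (c :: a :: e))).trans <|
      (Eqv.cons c (Eqv.cons b (braidE hca.symm e))).trans
      (braidE hcb (a :: c :: e))
  · exact (Eqv.cons c (Eqv.cons b hsp)).trans <|
      (Eqv.cons c (Eqv.cons b (Eqv.cons a (Eqv.cons c hpe)))).trans <|
      (Eqv.cons c (swapE hfab.symm (c :: b :: e))).trans <|
      (Eqv.cons c (Eqv.cons a (braidE hcb.symm e))).trans <|
      (braidE hca (b :: c :: e)).trans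
      (Eqv.cons a (Eqv.cons c (swapE hfab (c :: e))))

theorem cube {N : ℕ} (K : GP N) {a b c : ℕ} (hab : a ≠ b) (hac : a ≠ c) (hbc : b ≠ c)
    {t s : W} (hyp : C c a ++ t ≋ C c b ++ s) (hl : (C c a ++ t).length ≤ N) :
    ∃ w, C a c ++ t ≋ C a b ++ w ∧ C b c ++ s ≋ C b a ++ w := by
  rcases far_or_adj (Ne.symm hac) with h1 | h1 <;> rcases far_or_adj (Ne.symm hbc) with h2 | h2
  · exact cube_ff K hab h1 h2 hyp hl
  · exact cube_ft K hab h1 h2 hyp hl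
  · obtain ⟨w, g1, g2⟩ := cube_ft K (Ne.symm hab) h2 h1 hyp.symm (hyp.length ▸ hl)
    exact ⟨w, g2, g1⟩
  · exact cube_tt K hab h1 h2 hyp hl

/-- The Garside key theorem, by induction on the length. -/
theorem GP_all (n : ℕ) : GP n := by
  induction n using Nat.strong_induction_on with
  | _ n IH =>
    intro a b u v hlen h
    suffices H : ∀ x, Eqv x (b :: v) → ∀ a u, x = a :: u → (a :: u).length ≤ n →
        ((a = b → u ≋ v) ∧ (a ≠ b → ∃ w, u ≋ C a b ++ w ∧ v ≋ C b a ++ w)) by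
      exact H _ h a u rfl hlen
    intro x hx
    induction hx using Relation.ReflTransGen.head_induction_on with
    | refl =>
      intro a u hx _
      injection hx with h1 h2
      subst h1; subst h2
      exact ⟨fun _ => Eqv.rfl', fun hne => absurd rfl hne⟩
    | head hstep hrest ih =>
      intro a u hx hlen
      subst hx
      have hn1 : 1 ≤ n := le_trans (by simp) hlen
      have K : GP (n - 1) := IH (n - 1) (by omega)
      rcases step_cons hstep with ⟨u₁, rfl, hs⟩ | ⟨c, t, hac, rfl, rfl⟩
      · have hlen1 : (a :: u₁).length ≤ n := by
          have := hs.length; simp at this hlen ⊢; omega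
        obtain ⟨c1, c2⟩ := ih a u₁ rfl hlen1
        have huu1 : u ≋ u₁ := Eqv.of_step hs
        refine ⟨fun hab => huu1.trans (c1 hab), fun hab => ?_⟩
        obtain ⟨w, hw1, hw2⟩ := c2 hab
        exact ⟨w, huu1.trans hw1, hw2⟩
      · -- head letter changed : a::(C a c ++ t) → c::(C c a ++ t)
        have hlc : (C c a ++ t).length = (C a c ++ t).length := by
          have := hstep.length
          simp only [List.length_cons, List.length_append] at this ⊢; omega
        have hlen2 : (c :: (C c a ++ t)).length ≤ n := by
          simp only [List.length_cons, hlc]; simpa using hlen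
        obtain ⟨d1, d2⟩ := ih c (C c a ++ t) rfl hlen2
        have hlN : (C c a ++ t).length ≤ n - 1 := by
          simp only [List.length_cons] at hlen2; omega
        constructor
        · rintro rfl
          -- a = b ; c ≠ a
          obtain ⟨w, hw1, hw2⟩ := d2 (Ne.symm hac)
          have htw : t ≋ w := cancel_pre K hw1 hlN
          exact (Eqv.append_left (C a c) htw).trans hw2.symm
        · intro hab
          by_cases hcb : c = b
          · subst hcb
            have hv : C c a ++ t ≋ v := d1 rfl
            exact ⟨t, Eqv.rfl', hv.symm⟩
          · obtain ⟨s', hw1, hw2⟩ := d2 hcb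
            obtain ⟨w, g1, g2⟩ := cube K hab hac (Ne.symm hcb) hw1 hlN
            exact ⟨w, g1, hw2.trans g2⟩


/-! ### Divisibility, conditional lcm, gcd -/

theorem cancel {p u v : W} (h : (p ++ u) ≋ (p ++ v)) : u ≋ v :=
  cancel_pre (GP_all ((p ++ u).length)) h le_rfl

theorem key {a b : ℕ} {u v : W} (hne : a ≠ b) (h : (a :: u) ≋ (b :: v)) :
    ∃ w, u ≋ C a b ++ w ∧ v ≋ C b a ++ w :=
  key_of (GP_all ((a :: u).length)) hne h le_rfl

/-- `g` left-divides `c` (as positive braid words). -/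
def Dvd (g c : W) : Prop := ∃ w, c ≋ g ++ w

theorem Dvd.rfl {c : W} : Dvd c c := ⟨[], by rw [List.append_nil]⟩

theorem nil_dvd (c : W) : Dvd [] c := ⟨c, Eqv.rfl'⟩

theorem Dvd.of_eqv_right {g c c' : W} (h : Dvd g c) (hc : c ≋ c') : Dvd g c' := by
  obtain ⟨w, hw⟩ := h; exact ⟨w, hc.symm.trans hw⟩

theorem Dvd.of_eqv_left {g g' c : W} (hg : g ≋ g') (h : Dvd g c) : Dvd g' c := by
  obtain ⟨w, hw⟩ := h; exact ⟨w, hw.trans (Eqv.append_right w hg)⟩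

theorem Dvd.trans {g m c : W} (h₁ : Dvd g m) (h₂ : Dvd m c) : Dvd g c := by
  obtain ⟨w, hw⟩ := h₁; obtain ⟨e, he⟩ := h₂
  exact ⟨w ++ e, he.trans (by
    have := Eqv.append_right e hw
    simpa [List.append_assoc] using this)⟩

theorem dvd_append {g w : W} : Dvd g (g ++ w) := ⟨w, by rfl⟩

theorem Dvd.append_right {g c : W} (h : Dvd g c) (e : W) : Dvd g (c ++ e) := by
  obtain ⟨w, hw⟩ := h
  exact ⟨w ++ e, by simpa [List.append_assoc] using Eqv.append_right e hw⟩

theorem Dvd.length_le {g c : W} (h : Dvd g c) : g.length ≤ c.length := by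
  obtain ⟨w, hw⟩ := h; have := hw.length; simp [List.length_append] at this; omega

/-- Conditional lcm: any two left divisors of `c` admit a left lcm which
left-divides `c`. -/
theorem lcm_cond (N : ℕ) : ∀ c g h : W, c.length ≤ N → Dvd g c → Dvd h c →
    ∃ m, Dvd m c ∧ Dvd g m ∧ Dvd h m ∧ ∀ d, Dvd g d → Dvd h d → Dvd m d := by
  induction N using Nat.strong_induction_on with
  | _ N IH =>
    have atom : ∀ hw c : W, c.length ≤ N → ∀ a, Dvd [a] c → Dvd hw c →
        ∃ m, Dvd m c ∧ Dvd [a] m ∧ Dvd hw m ∧ ∀ d, Dvd [a] d → Dvd hw d → Dvd m d := by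
      intro hw
      induction hw with
      | nil => exact fun c hc a ha _ => ⟨[a], ha, Dvd.rfl, nil_dvd _, fun d hd _ => hd⟩
      | cons b h' ih =>
        intro c hc a ha hbh
        by_cases hab : a = b
        · subst hab
          exact ⟨a :: h', hbh, ⟨h', by rfl⟩, Dvd.rfl, fun d _ hd => hd⟩
        · obtain ⟨c₂, hc2⟩ := ha
          obtain ⟨w₁, hw1⟩ := hbh
          obtain ⟨w, hcw, hbw⟩ := key hab (hc2.symm.trans hw1)
          have hlen : (h' ++ w₁).length ≤ N - 1 := by
            have := hw1.length; simp [List.length_append] at this ⊢; omega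
          have hN1 : N - 1 < N := by
            have := hw1.length; simp at this; omega
          obtain ⟨m', hm'c, hCm', hh'm', huniv⟩ :=
            IH (N - 1) hN1 (h' ++ w₁) (C b a) h' hlen ⟨w, hbw⟩ ⟨w₁, Eqv.rfl'⟩
          refine ⟨b :: m', ?_, ?_, ?_, ?_⟩
          · obtain ⟨e, he⟩ := hm'c; exact ⟨e, hw1.trans (Eqv.cons b he)⟩
          · obtain ⟨w', hw'⟩ := hCm'
            exact ⟨C a b ++ w', (Eqv.cons b hw').trans (lcm_swap hab w').symm⟩
          · obtain ⟨e, he⟩ := hh'm'; exact ⟨e, Eqv.cons b he⟩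
          · intro d hda hdbh
            obtain ⟨d₂, hd2⟩ := hda
            obtain ⟨e₁, he1⟩ := hdbh
            obtain ⟨w2, _, hbw2⟩ := key hab (hd2.symm.trans he1)
            obtain ⟨e2, he2⟩ := huniv (h' ++ e₁) ⟨w2, hbw2⟩ ⟨e₁, Eqv.rfl'⟩
            exact ⟨e2, he1.trans (Eqv.cons b he2)⟩
    intro c g hh hc hg hhh
    match g with
    | [] => exact ⟨hh, hhh, nil_dvd _, Dvd.rfl, fun d _ hd => hd⟩
    | a :: g' =>
      obtain ⟨w₀, hw0⟩ := hg
      have ha : Dvd [a] c := ⟨g' ++ w₀, hw0⟩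
      obtain ⟨m₁, hm1c, ham1, hhm1, huniv1⟩ := atom hh c hc a ha hhh
      obtain ⟨k, hk⟩ := ham1
      obtain ⟨e, he⟩ := hm1c
      have hkc' : Dvd k (g' ++ w₀) :=
        ⟨e, cancel (p := [a]) (hw0.symm.trans (he.trans (Eqv.append_right e hk)))⟩
      have hlen : (g' ++ w₀).length ≤ N - 1 := by
        have := hw0.length; simp [List.length_append] at this ⊢; omega
      have hN1 : N - 1 < N := by
        have := hw0.length; simp at this; omega
      obtain ⟨m₂, hm2, hgm2, hkm2, huniv2⟩ :=
        IH (N - 1) hN1 (g' ++ w₀) g' k hlen ⟨w₀, Eqv.rfl'⟩ hkc'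
      have hm1m : Dvd m₁ (a :: m₂) := by
        obtain ⟨e2, he2⟩ := hkm2
        exact ⟨e2, (Eqv.cons a he2).trans (Eqv.append_right e2 hk).symm⟩
      refine ⟨a :: m₂, ?_, ?_, hhm1.trans hm1m, ?_⟩
      · obtain ⟨e2, he2⟩ := hm2; exact ⟨e2, hw0.trans (Eqv.cons a he2)⟩
      · obtain ⟨e2, he2⟩ := hgm2; exact ⟨e2, Eqv.cons a he2⟩
      · intro d hgd hhd
        obtain ⟨f, hf⟩ := hgd
        obtain ⟨f1, hf1⟩ := huniv1 d ⟨g' ++ f, hf⟩ hhd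
        have hcan : (g' ++ f) ≋ k ++ f1 :=
          cancel (p := [a]) (hf.symm.trans (hf1.trans (Eqv.append_right f1 hk)))
        obtain ⟨f2, hf2⟩ := huniv2 (g' ++ f) ⟨f, Eqv.rfl'⟩ ⟨f1, hcan⟩
        exact ⟨f2, hf.trans (Eqv.cons a hf2)⟩

/-- Left gcd of positive braid words. -/
theorem gcd_exists (u v : W) :
    ∃ g, Dvd g u ∧ Dvd g v ∧ ∀ h, Dvd h u → Dvd h v → Dvd h g := by
  have hne : {l | ∃ h, Dvd h u ∧ Dvd h v ∧ h.length = l}.Nonempty :=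
    ⟨0, [], nil_dvd u, nil_dvd v, rfl⟩
  have hbdd : BddAbove {l | ∃ h, Dvd h u ∧ Dvd h v ∧ h.length = l} := by
    refine ⟨u.length, ?_⟩
    rintro l ⟨h, hu, _, rfl⟩
    exact hu.length_le
  obtain ⟨g, hgu, hgv, hglen⟩ := Nat.sSup_mem hne hbdd
  refine ⟨g, hgu, hgv, fun h hu hv => ?_⟩
  obtain ⟨m, hmu, hgm, hhm, huniv⟩ := lcm_cond u.length u g h le_rfl hgu hu
  have hmS : m.length ∈ {l | ∃ h, Dvd h u ∧ Dvd h v ∧ h.length = l} :=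
    ⟨m, hmu, huniv v hgv hv, rfl⟩
  have hle : m.length ≤ g.length := hglen ▸ le_csSup hbdd hmS
  obtain ⟨e, he⟩ := hgm
  have he0 : e = [] := by
    have := he.length; simp [List.length_append] at this
    have : e.length = 0 := by omega
    simpa [List.length_eq_zero_iff] using this
  subst he0
  obtain ⟨x, hx⟩ := hhm
  exact ⟨x, (by simpa using he : m ≋ g).symm.trans hx⟩

/-! ### The Garside element Δ -/

theorem eqv_of_eq {u v : W} (h : u = v) : u ≋ v := h ▸ Eqv.rfl'

instance : Trans Eqv Eqv Eqv := ⟨Eqv.trans⟩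
instance : Trans (Eq (α := W)) Eqv Eqv := ⟨fun h h' => h ▸ h'⟩
instance : Trans Eqv (Eq (α := W)) Eqv := ⟨fun h h' => h' ▸ h⟩

def asc (k : ℕ) : W := List.range k
def desc (k : ℕ) : W := (List.range k).reverse

def DD : ℕ → W
  | 0 => []
  | k + 1 => asc (k + 1) ++ DD k

theorem far_commute {x : ℕ} {u : W} (h : ∀ c ∈ u, Far x c) : x :: u ≋ u ++ [x] := by
  induction u with
  | nil => rfl
  | cons c u ih =>
    exact (swapE (h c (by simp)) u).trans
      ((Eqv.cons c (ih (fun d hd => h d (by simp [hd])))).trans (eqv_of_eq (by simp)))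

theorem S_lemma : ∀ k a : ℕ, a + 2 ≤ k → ((a + 1) :: asc k) ≋ (asc k ++ [a]) := by
  intro k
  induction k with
  | zero => intro a ha; omega
  | succ k ih =>
    intro a ha
    by_cases hak : a + 2 ≤ k
    · have h1 : asc (k + 1) = asc k ++ [k] := by simp [asc, List.range_succ]
      rw [h1]
      calc ((a+1) :: (asc k ++ [k])) ≋ (asc k ++ [a]) ++ [k] := by
            have := (ih a hak).append_right [k]
            simpa using this
        _ ≋ asc k ++ [k] ++ [a] := by
            have : ([a] ++ ([k] ++ [])) ≋ ([k] ++ ([a] ++ [])) := swapE (Or.inl (by omega)) []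
            have h2 := this.append_left (asc k)
            simpa using h2
    · -- a + 2 = k + 1, i.e. k = a + 1
      have hk : k = a + 1 := by omega
      subst hk
      have h1 : asc (a + 2) = asc a ++ [a, a + 1] := by
        simp [asc, List.range_succ]
      rw [h1]
      have hfar : ∀ c ∈ asc a, Far (a + 1) c := by
        intro c hc; simp [asc] at hc; exact Or.inr (by omega)
      calc ((a+1) :: (asc a ++ [a, a+1]))
          ≋ (asc a ++ [a+1]) ++ [a, a+1] := by
            have := (far_commute hfar).append_right [a, a+1]
            simpa using this
        _ ≋ asc a ++ [a+1, a, a+1] := eqv_of_eq (by simp)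
        _ ≋ asc a ++ [a, a+1, a] := (braidE (Or.inr rfl) []).append_left (asc a)
        _ ≋ (asc a ++ [a, a+1]) ++ [a] := eqv_of_eq (by simp)

theorem mem_DD_lt : ∀ k, ∀ a ∈ DD k, a < k := by
  intro k
  induction k with
  | zero => simp [DD]
  | succ k ih =>
    intro a ha
    simp only [DD, List.mem_append] at ha
    rcases ha with ha | ha
    · simpa [asc] using ha
    · exact lt_trans (ih a ha) (by omega)

theorem DD_dvd_letter : ∀ k a, a < k → Dvd [a] (DD k) := by
  intro k
  induction k with
  | zero => omega
  | succ k ih =>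
    intro a ha
    match a with
    | 0 =>
      refine ⟨(List.map Nat.succ (List.range k)) ++ DD k, eqv_of_eq ?_⟩
      show DD (k+1) = [0] ++ _
      simp [DD, asc, List.range_succ_eq_map]
    | b + 1 =>
      obtain ⟨w, hw⟩ := ih b (by omega)
      refine ⟨asc (k+1) ++ w, ?_⟩
      calc DD (k+1) ≋ asc (k+1) ++ ([b] ++ w) := hw.append_left (asc (k+1))
        _ ≋ ((b+1) :: asc (k+1)) ++ w := by
            have := ((S_lemma (k+1) b (by omega)).symm).append_right w
            simpa using this
        _ ≋ [b+1] ++ (asc (k+1) ++ w) := eqv_of_eq (by simp)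

theorem W2_lemma : ∀ k, DD (k + 1) ≋ DD k ++ desc (k + 1) := by
  intro k
  induction k with
  | zero => exact eqv_of_eq (by simp [DD, asc, desc, List.range_succ])
  | succ k ih =>
    have hdesc : desc (k + 2) = (k+1) :: desc (k + 1) := by
      simp [desc, List.range_succ]
    have hasc : asc (k + 2) = asc (k+1) ++ [k+1] := by simp [asc, List.range_succ]
    have hfar : ∀ c ∈ DD k, Far (k+1) c := fun c hc => Or.inr (by
      have := mem_DD_lt k c hc; omega)
    calc DD (k+2) = asc (k+2) ++ DD (k+1) := rfl
      _ ≋ asc (k+2) ++ (DD k ++ desc (k+1)) := ih.append_left _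
      _ ≋ asc (k+1) ++ (((k+1) :: DD k) ++ desc (k+1)) := eqv_of_eq (by simp [hasc])
      _ ≋ asc (k+1) ++ ((DD k ++ [k+1]) ++ desc (k+1)) :=
          (((far_commute hfar).append_right _).append_left _)
      _ ≋ DD (k+1) ++ desc (k+2) := eqv_of_eq (by simp [DD, hdesc])

theorem revDD : ∀ k, (DD k).reverse ≋ DD k := by
  intro k
  induction k with
  | zero => rfl
  | succ k ih =>
    calc (DD (k+1)).reverse = (DD k).reverse ++ desc (k+1) := by
          simp [DD, asc, desc]
      _ ≋ DD k ++ desc (k+1) := ih.append_right _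
      _ ≋ DD (k+1) := (W2_lemma k).symm

theorem D2full : ∀ k, ∀ a, a < k → ([a] ++ DD k) ≋ (DD k ++ [k - 1 - a]) := by
  intro k
  induction k with
  | zero => omega
  | succ k ih =>
    have hpos : ∀ a, 1 ≤ a → a < k + 1 → ([a] ++ DD (k+1)) ≋ (DD (k+1) ++ [k - a]) := by
      intro a h1 h2
      obtain ⟨b, rfl⟩ : ∃ b, a = b + 1 := ⟨a - 1, by omega⟩
      calc [b+1] ++ DD (k+1) = ((b+1) :: asc (k+1)) ++ DD k := by simp [DD]
        _ ≋ (asc (k+1) ++ [b]) ++ DD k := (S_lemma (k+1) b (by omega)).append_right _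
        _ ≋ asc (k+1) ++ ([b] ++ DD k) := eqv_of_eq (by simp)
        _ ≋ asc (k+1) ++ (DD k ++ [k - 1 - b]) := (ih b (by omega)).append_left _
        _ ≋ DD (k+1) ++ [k - (b+1)] := eqv_of_eq (by
            simp only [DD, List.append_assoc]
            congr 3
            omega)
    intro a ha
    match a, ha with
    | b + 1, ha => exact (by simpa using hpos (b+1) (by omega) ha)
    | 0, _ =>
      match k with
      | 0 => exact eqv_of_eq rfl
      | k + 1 =>
        have h := hpos (k+1) (by omega) (by omega)
        have h2 := h.reverse
        simp only [List.reverse_append, List.reverse_cons] at h2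
        -- h2 : (DD (k+2)).reverse ++ [k+1] ≋ [k+1 - (k+1)] ++ (DD (k+2)).reverse
        have h3 : (DD (k+2) ++ [k+1]) ≋ ([0] ++ DD (k+2)) := by
          calc DD (k+2) ++ [k+1] ≋ (DD (k+2)).reverse ++ [k+1] :=
                (revDD (k+2)).symm.append_right _
            _ ≋ [k+1 - (k+1)] ++ (DD (k+2)).reverse := by simpa using h2
            _ ≋ [0] ++ DD (k+2) := by
                simpa [Nat.sub_self] using (revDD (k+2)).append_left [k+1-(k+1)]
        simpa using h3.symm

/-- The flip morphism on letters. -/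
theorem D2w : ∀ (k : ℕ) (u : W), (∀ a ∈ u, a < k) →
    (u ++ DD k) ≋ (DD k ++ u.map (fun a => k - 1 - a)) := by
  intro k u
  induction u with
  | nil => intro _; exact eqv_of_eq (by simp)
  | cons a u ih =>
    intro hb
    calc (a :: u) ++ DD k = [a] ++ (u ++ DD k) := by simp
      _ ≋ [a] ++ (DD k ++ u.map (fun a => k - 1 - a)) :=
          (ih (fun c hc => hb c (by simp [hc]))).append_left _
      _ ≋ ([a] ++ DD k) ++ u.map (fun a => k - 1 - a) := eqv_of_eq (by simp)
      _ ≋ (DD k ++ [k - 1 - a]) ++ u.map (fun a => k - 1 - a) :=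
          (D2full k a (hb a (by simp))).append_right _
      _ ≋ DD k ++ (a :: u).map (fun a => k - 1 - a) := eqv_of_eq (by simp)

def Dp (k : ℕ) : ℕ → W
  | 0 => []
  | j + 1 => DD k ++ Dp k j

theorem Dp_add (k i j : ℕ) : Dp k (i + j) = Dp k i ++ Dp k j := by
  induction i with
  | zero => simp [Dp]
  | succ i ih =>
    rw [show i + 1 + j = (i + j) + 1 from by omega]
    show DD k ++ Dp k (i + j) = (DD k ++ Dp k i) ++ Dp k j
    rw [ih, List.append_assoc]

theorem Dp_comm (k : ℕ) : ∀ (j : ℕ) (u : W), (∀ a ∈ u, a < k) →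
    ∃ u', (∀ a ∈ u', a < k) ∧ (u ++ Dp k j) ≋ (Dp k j ++ u') := by
  intro j
  induction j with
  | zero => intro u hu; exact ⟨u, hu, eqv_of_eq (by simp [Dp])⟩
  | succ j ih =>
    intro u hu
    have hmap : ∀ a ∈ u.map (fun a => k - 1 - a), a < k := by
      intro a ha
      simp only [List.mem_map] at ha
      obtain ⟨b, hb, rfl⟩ := ha
      have := hu b hb; omega
    obtain ⟨u', hu', heq⟩ := ih (u.map (fun a => k - 1 - a)) hmap
    refine ⟨u', hu', ?_⟩
    calc u ++ Dp k (j+1) = (u ++ DD k) ++ Dp k j := by simp [Dp]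
      _ ≋ (DD k ++ u.map (fun a => k - 1 - a)) ++ Dp k j := (D2w k u hu).append_right _
      _ ≋ DD k ++ (u.map (fun a => k - 1 - a) ++ Dp k j) := eqv_of_eq (by simp)
      _ ≋ DD k ++ (Dp k j ++ u') := heq.append_left _
      _ ≋ Dp k (j+1) ++ u' := eqv_of_eq (by simp [Dp])

theorem dvd_Dp : ∀ (k : ℕ) (u : W), (∀ a ∈ u, a < k) → Dvd u (Dp k u.length) := by
  intro k u
  induction u with
  | nil => intro _; exact nil_dvd _
  | cons a u ih =>
    intro hb
    obtain ⟨w, hw⟩ := DD_dvd_letter k a (hb a (by simp))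
    have hwb : ∀ c ∈ w, c < k := by
      intro c hc
      exact mem_DD_lt k c (hw.mem.2 (by simp [hc]))
    obtain ⟨e, he⟩ := ih (fun c hc => hb c (by simp [hc]))
    obtain ⟨w', _, hw'⟩ := Dp_comm k u.length w hwb
    refine ⟨e ++ w', ?_⟩
    calc Dp k (u.length + 1) = DD k ++ Dp k u.length := rfl
      _ ≋ ([a] ++ w) ++ Dp k u.length := hw.append_right _
      _ ≋ [a] ++ (w ++ Dp k u.length) := eqv_of_eq (by simp)
      _ ≋ [a] ++ (Dp k u.length ++ w') := hw'.append_left _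
      _ ≋ [a] ++ ((u ++ e) ++ w') := (he.append_right w').append_left _
      _ ≋ (a :: u) ++ (e ++ w') := eqv_of_eq (by simp)

theorem dvd_Dp_of_le {k : ℕ} {u : W} (hu : ∀ a ∈ u, a < k) {j : ℕ} (hj : u.length ≤ j) :
    Dvd u (Dp k j) := by
  have := (dvd_Dp k u hu).append_right (Dp k (j - u.length))
  rw [← Dp_add] at this
  rwa [show u.length + (j - u.length) = j from by omega] at this

theorem mem_Dp_lt (k : ℕ) : ∀ j, ∀ a ∈ Dp k j, a < k := by
  intro j
  induction j with
  | zero => simp [Dp]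
  | succ j ih =>
    intro a ha
    simp only [Dp, List.mem_append] at ha
    rcases ha with ha | ha
    · exact mem_DD_lt k a ha
    · exact ih a ha

/-- Bounded common right multiples. -/
theorem common_right_mul {k : ℕ} {u v : W} (hu : ∀ a ∈ u, a < k) (hv : ∀ a ∈ v, a < k) :
    ∃ c, Dvd u c ∧ Dvd v c ∧ (∀ a ∈ c, a < k) := by
  refine ⟨Dp k (max u.length v.length), dvd_Dp_of_le hu (le_max_left _ _),
    dvd_Dp_of_le hv (le_max_right _ _), ?_⟩
  intro a ha
  exact mem_Dp_lt k _ a ha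

theorem letter_bound (u : W) : ∀ a ∈ u, a < u.sum + 1 := by
  intro a ha
  have := List.single_le_sum (fun b _ => Nat.zero_le b) a ha
  omega

/-- Unbounded common right multiples. -/
theorem common_right_mul' (u v : W) : ∃ c, Dvd u c ∧ Dvd v c := by
  have hu : ∀ a ∈ u, a < (u ++ v).sum + 1 := by
    intro a ha
    have := letter_bound (u ++ v) a (by simp [ha])
    omega
  have hv : ∀ a ∈ v, a < (u ++ v).sum + 1 := by
    intro a ha
    have := letter_bound (u ++ v) a (by simp [ha])
    omega
  obtain ⟨c, h1, h2, _⟩ := common_right_mul hu hv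
  exact ⟨c, h1, h2⟩

/-- Common left multiples, by reversal. -/
theorem common_left_mul (u v : W) : ∃ c x y, c ≋ x ++ u ∧ c ≋ y ++ v := by
  obtain ⟨c, ⟨x, hx⟩, ⟨y, hy⟩⟩ := common_right_mul' u.reverse v.reverse
  refine ⟨c.reverse, x.reverse, y.reverse, ?_, ?_⟩
  · have := hx.reverse; simpa using this
  · have := hy.reverse; simpa using this
/-! ### The positive braid monoid as a quotient -/

def braidSetoid : Setoid W := ⟨Eqv, ⟨Eqv.refl, Eqv.symm, Eqv.trans⟩⟩

/-- The (infinite) positive braid monoid. -/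
def P := Quotient braidSetoid

def pmk (u : W) : P := Quotient.mk braidSetoid u

instance : Monoid P where
  mul := Quotient.map₂ (· ++ ·) (fun _ _ h₁ _ _ h₂ => h₁.append h₂)
  one := pmk []
  mul_assoc := by
    rintro ⟨u⟩ ⟨v⟩ ⟨w⟩
    exact congrArg (Quotient.mk _) (List.append_assoc u v w)
  one_mul := by rintro ⟨u⟩; rfl
  mul_one := by
    rintro ⟨u⟩
    exact congrArg (Quotient.mk _) (List.append_nil u)

theorem pmk_mul (u v : W) : pmk u * pmk v = pmk (u ++ v) := rfl

theorem pmk_eq {u v : W} (h : u ≋ v) : pmk u = pmk v := Quotient.sound h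

theorem pmk_exact {u v : W} (h : pmk u = pmk v) : u ≋ v := Quotient.exact h

theorem P.mul_left_cancel : ∀ {x y z : P}, x * y = x * z → y = z := by
  rintro ⟨u⟩ ⟨v⟩ ⟨w⟩ h
  exact Quotient.sound (cancel (p := u) (Quotient.exact h))

theorem cancel_right {p u v : W} (h : (u ++ p) ≋ (v ++ p)) : u ≋ v := by
  have h2 := h.reverse
  simp only [List.reverse_append] at h2
  have h3 := cancel (p := p.reverse) h2
  have h4 := h3.reverse
  simpa using h4

theorem P.mul_right_cancel : ∀ {x y z : P}, x * y = z * y → x = z := by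
  rintro ⟨u⟩ ⟨v⟩ ⟨w⟩ h
  exact Quotient.sound (cancel_right (p := v) (Quotient.exact h))

theorem P.left_ore (r s : P) : ∃ p : P × P, p.1 * r = p.2 * s := by
  induction r using Quotient.ind with | _ u =>
  induction s using Quotient.ind with | _ v =>
  obtain ⟨c, x, y, hx, hy⟩ := common_left_mul u v
  exact ⟨(pmk x, pmk y), (pmk_eq hx).symm.trans (pmk_eq hy)⟩

noncomputable instance : OreLocalization.OreSet (⊤ : Submonoid P) where
  ore_right_cancel r₁ r₂ s h := ⟨1, by
    simpa using P.mul_right_cancel h⟩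
  oreNum r s := (P.left_ore r (s : P)).choose.2
  oreDenom r s := ⟨(P.left_ore r (s : P)).choose.1, trivial⟩
  ore_eq r s := (P.left_ore r (s : P)).choose_spec

/-- The group of fractions of the positive braid monoid. -/
abbrev PFrac := OreLocalization (⊤ : Submonoid P) P

theorem numeratorHom_inj :
    Function.Injective (OreLocalization.numeratorHom : P →* PFrac) := by
  intro r r' h
  rw [OreLocalization.numeratorHom_apply, OreLocalization.numeratorHom_apply,
    OreLocalization.oreDiv_eq_iff] at h
  obtain ⟨u, v, h1, h2⟩ := h
  have huv : (u : P) = v := by simpa using h2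
  simp only [Submonoid.smul_def, smul_eq_mul] at h1
  rw [huv] at h1
  exact (P.mul_left_cancel h1).symm

/-- Generators of the fraction group, as units. -/
noncomputable def genU (x : P) : PFracˣ := OreLocalization.numeratorUnit (⟨x, trivial⟩ : (⊤ : Submonoid P))

theorem genU_val (x : P) : (genU x : PFrac) = OreLocalization.numeratorHom x := rfl

end BraidWord


namespace Braid

/-! ### Auxiliary results connecting `B n` with the word combinatorics -/

/-- Evaluation of a positive word (0-indexed letters) in `B n`. -/
def evl (n : ℕ) (u : BraidWord.W) : B n := (u.map (fun a => gen n (a + 1))).prod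

namespace GarsideAux

open BraidWord

/-- Letters bounded for `B n`. -/
def Bdd (n : ℕ) (u : W) : Prop := ∀ a ∈ u, a < n - 1

theorem Bdd.of_eqv {n : ℕ} {u v : W} (h : u ≋ v) (hu : Bdd n u) : Bdd n v :=
  fun a ha => hu a (h.mem.2 ha)

theorem evl_nil (n : ℕ) : evl n [] = 1 := rfl

theorem evl_append (n : ℕ) (u v : W) : evl n (u ++ v) = evl n u * evl n v := by
  simp [evl]

theorem gen_of {n a : ℕ} (h : a < n - 1) :
    gen n (a + 1) = PresentedGroup.of (rels := braidRels (n - 1)) ⟨a, h⟩ := by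
  unfold gen
  rw [dif_pos (show a + 1 - 1 < n - 1 by omega)]
  rfl

theorem rel_one {n : ℕ} {r : FreeGroup (Fin (n - 1))} (hr : r ∈ braidRels (n - 1)) :
    PresentedGroup.mk (braidRels (n - 1)) r = 1 :=
  (QuotientGroup.eq_one_iff r).mpr (Subgroup.subset_normalClosure hr)

theorem of_comm {n : ℕ} (i j : Fin (n - 1)) (h : (i : ℕ) + 2 ≤ (j : ℕ)) :
    (PresentedGroup.of (rels := braidRels (n - 1)) i) * (PresentedGroup.of j) =
      (PresentedGroup.of j) * (PresentedGroup.of i) := by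
  have h1 := rel_one (n := n)
    (r := FreeGroup.of i * FreeGroup.of j * (FreeGroup.of i)⁻¹ * (FreeGroup.of j)⁻¹)
    ⟨i, j, Or.inl ⟨h, rfl⟩⟩
  simp only [map_mul, map_inv] at h1
  exact commutatorElement_eq_one_iff_mul_comm.mp h1

theorem of_braid {n : ℕ} (i j : Fin (n - 1)) (h : (j : ℕ) = (i : ℕ) + 1) :
    (PresentedGroup.of (rels := braidRels (n - 1)) i) * (PresentedGroup.of j) *
      (PresentedGroup.of i) =
    (PresentedGroup.of j) * (PresentedGroup.of i) * (PresentedGroup.of j) := by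
  have h1 := rel_one (n := n)
    (r := FreeGroup.of i * FreeGroup.of j * FreeGroup.of i *
      (FreeGroup.of j)⁻¹ * (FreeGroup.of i)⁻¹ * (FreeGroup.of j)⁻¹)
    ⟨i, j, Or.inr ⟨h, rfl⟩⟩
  simp only [map_mul, map_inv] at h1
  set x := PresentedGroup.mk (braidRels (n - 1)) (FreeGroup.of i)
  set y := PresentedGroup.mk (braidRels (n - 1)) (FreeGroup.of j)
  have h2 : x * y * x = (x * y * x * y⁻¹ * x⁻¹ * y⁻¹) * (y * x * y) := by group
  rw [h1, one_mul] at h2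
  exact h2

theorem evl_brel {n : ℕ} {u v : W} (hb : Bdd n u) (h : Brel u v) : evl n u = evl n v := by
  cases h with
  | @far a b hf =>
    have ha : a < n - 1 := hb a (by simp)
    have hbb : b < n - 1 := hb b (by simp)
    show gen n (a+1) * (gen n (b+1) * 1) = gen n (b+1) * (gen n (a+1) * 1)
    rw [mul_one, mul_one, gen_of ha, gen_of hbb]
    rcases hf with hf | hf
    · exact of_comm ⟨a, ha⟩ ⟨b, hbb⟩ hf
    · exact (of_comm ⟨b, hbb⟩ ⟨a, ha⟩ hf).symm
  | @adj a b hadj =>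
    have ha : a < n - 1 := hb a (by simp)
    have hbb : b < n - 1 := hb b (by simp)
    show gen n (a+1) * (gen n (b+1) * (gen n (a+1) * 1)) =
      gen n (b+1) * (gen n (a+1) * (gen n (b+1) * 1))
    rw [mul_one, mul_one, gen_of ha, gen_of hbb, ← mul_assoc, ← mul_assoc]
    rcases hadj with hadj | hadj
    · exact of_braid ⟨a, ha⟩ ⟨b, hbb⟩ hadj
    · exact (of_braid ⟨b, hbb⟩ ⟨a, ha⟩ hadj).symm

theorem evl_step {n : ℕ} {u v : W} (hb : Bdd n u) (h : Step u v) : evl n u = evl n v := by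
  obtain ⟨x, l, r, y, hrel, rfl, rfl⟩ := h
  rw [evl_append, evl_append, evl_append, evl_append]
  have hbl : Bdd n l := fun a ha => hb a (by simp [ha])
  rw [evl_brel hbl hrel]

theorem evl_eqv {n : ℕ} {u v : W} (hb : Bdd n u) (h : u ≋ v) : evl n u = evl n v := by
  induction h with
  | refl => rfl
  | tail huv hs ih =>
    exact ih.trans (evl_step (Bdd.of_eqv huv hb) hs)

theorem mem_Bplus_iff {n : ℕ} {x : B n} :
    x ∈ Bplus n n ↔ ∃ u, Bdd n u ∧ x = evl n u := by
  constructor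
  · intro hx
    induction hx using Submonoid.closure_induction with
    | mem x hx =>
      obtain ⟨i, hi1, hi2, rfl⟩ := hx
      refine ⟨[i - 1], fun a ha => by simp at ha; omega, ?_⟩
      show gen n i = gen n (i - 1 + 1) * 1
      rw [mul_one, show i - 1 + 1 = i from by omega]
    | one => exact ⟨[], fun a ha => by simp at ha, rfl⟩
    | mul x y _ _ hx hy =>
      obtain ⟨u, hu, rfl⟩ := hx
      obtain ⟨v, hv, rfl⟩ := hy
      exact ⟨u ++ v, fun a ha => by
        rcases List.mem_append.1 ha with h | h
        exacts [hu a h, hv a h], (evl_append n u v).symm⟩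
  · rintro ⟨u, hu, rfl⟩
    induction u with
    | nil => exact one_mem _
    | cons a u ih =>
      have ha : a < n - 1 := hu a (by simp)
      have : evl n (a :: u) = gen n (a + 1) * evl n u := by simp [evl]
      rw [this]
      exact mul_mem (Submonoid.subset_closure ⟨a + 1, by omega, by omega, rfl⟩)
        (ih (fun b hb => hu b (by simp [hb])))

/-! #### Injectivity of `evl` on bounded words, via the group of fractions -/

noncomputable def fGen (n : ℕ) : Fin (n - 1) → PFracˣ := fun i => genU (pmk [(i : ℕ)])

theorem fGen_rels (n : ℕ) : ∀ r ∈ braidRels (n - 1), FreeGroup.lift (fGen n) r = 1 := by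
  rintro r ⟨i, j, ⟨hij, rfl⟩ | ⟨hij, rfl⟩⟩
  · simp only [map_mul, map_inv, FreeGroup.lift_apply_of]
    have key : fGen n i * fGen n j = fGen n j * fGen n i := by
      apply Units.ext
      rw [Units.val_mul, Units.val_mul]
      show OreLocalization.numeratorHom (pmk [(i : ℕ)]) * OreLocalization.numeratorHom (pmk [(j : ℕ)]) =
        OreLocalization.numeratorHom (pmk [(j : ℕ)]) * OreLocalization.numeratorHom (pmk [(i : ℕ)])
      rw [← map_mul, ← map_mul, pmk_mul, pmk_mul]
      exact congrArg _ (pmk_eq (swapE (Or.inl hij) []))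
    rw [key]
    group
  · simp only [map_mul, map_inv, FreeGroup.lift_apply_of]
    have key : fGen n i * fGen n j * fGen n i = fGen n j * fGen n i * fGen n j := by
      apply Units.ext
      rw [Units.val_mul, Units.val_mul, Units.val_mul, Units.val_mul]
      show OreLocalization.numeratorHom (pmk [(i : ℕ)]) * OreLocalization.numeratorHom (pmk [(j : ℕ)]) *
          OreLocalization.numeratorHom (pmk [(i : ℕ)]) =
        OreLocalization.numeratorHom (pmk [(j : ℕ)]) * OreLocalization.numeratorHom (pmk [(i : ℕ)]) *
          OreLocalization.numeratorHom (pmk [(j : ℕ)])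
      rw [← map_mul, ← map_mul, ← map_mul, ← map_mul, pmk_mul, pmk_mul, pmk_mul, pmk_mul]
      exact congrArg _ (pmk_eq (braidE (Or.inl hij) []))
    rw [key]
    group

noncomputable def Phi (n : ℕ) : B n →* PFracˣ := PresentedGroup.toGroup (fGen_rels n)

theorem Phi_evl {n : ℕ} {u : W} (hu : Bdd n u) :
    ((Phi n (evl n u) : PFracˣ) : PFrac) = OreLocalization.numeratorHom (pmk u) := by
  induction u with
  | nil =>
    show ((Phi n 1 : PFracˣ) : PFrac) = _
    rw [map_one]
    exact (map_one (OreLocalization.numeratorHom : P →* PFrac)).symm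
  | cons a u ih =>
    have ha : a < n - 1 := hu a (by simp)
    have h1 : evl n (a :: u) = gen n (a + 1) * evl n u := by simp [evl]
    rw [h1, map_mul, gen_of ha]
    have h2 : Phi n (PresentedGroup.of ⟨a, ha⟩) = fGen n ⟨a, ha⟩ :=
      PresentedGroup.toGroup.of (fGen_rels n)
    rw [Units.val_mul, h2, ih (fun b hb => hu b (by simp [hb]))]
    show (genU (pmk [a]) : PFrac) * _ = _
    rw [genU_val, ← map_mul, pmk_mul]
    rfl

theorem evl_inj {n : ℕ} {u v : W} (hu : Bdd n u) (hv : Bdd n v)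
    (h : evl n u = evl n v) : u ≋ v := by
  have h2 := congrArg (fun x => ((Phi n x : PFracˣ) : PFrac)) h
  simp only [Phi_evl hu, Phi_evl hv] at h2
  exact pmk_exact (numeratorHom_inj h2)

theorem ldiv_iff {n : ℕ} {g u : W} (hg : Bdd n g) (hu : Bdd n u) :
    LDiv n (evl n g) (evl n u) ↔ BraidWord.Dvd g u := by
  constructor
  · intro h
    obtain ⟨w, hwb, hw⟩ := mem_Bplus_iff.1 h
    have : evl n u = evl n (g ++ w) := by
      rw [evl_append, ← hw, mul_inv_cancel_left]
    exact ⟨w, evl_inj hu (fun a ha => by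
      rcases List.mem_append.1 ha with h' | h'
      exacts [hg a h', hwb a h']) this⟩
  · rintro ⟨w, hw⟩
    have hwb : Bdd n w := fun a ha => (Bdd.of_eqv hw hu) a (by simp [ha])
    have h1 : evl n u = evl n g * evl n w := by
      rw [← evl_append]
      exact evl_eqv hu hw
    show (evl n g)⁻¹ * evl n u ∈ Bplus n n
    rw [h1, ← mul_assoc, inv_mul_cancel, one_mul]
    exact mem_Bplus_iff.2 ⟨w, hwb, rfl⟩

/-! #### The length homomorphism and triviality of units -/

theorem lenF_rels (n : ℕ) : ∀ r ∈ braidRels (n - 1),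
    FreeGroup.lift (fun _ : Fin (n - 1) => Multiplicative.ofAdd (1 : ℤ)) r = 1 := by
  rintro r ⟨i, j, ⟨_, rfl⟩ | ⟨_, rfl⟩⟩ <;>
    · simp only [map_mul, map_inv, FreeGroup.lift_apply_of]
      group

noncomputable def lenHom (n : ℕ) : B n →* Multiplicative ℤ :=
  PresentedGroup.toGroup (lenF_rels n)

theorem lenHom_evl {n : ℕ} {u : W} (hu : Bdd n u) :
    lenHom n (evl n u) = Multiplicative.ofAdd (u.length : ℤ) := by
  induction u with
  | nil =>
    show lenHom n 1 = _
    rw [map_one]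
    rfl
  | cons a u ih =>
    have ha : a < n - 1 := hu a (by simp)
    have h1 : evl n (a :: u) = gen n (a + 1) * evl n u := by simp [evl]
    rw [h1, map_mul, gen_of ha]
    have h2 : lenHom n (PresentedGroup.of ⟨a, ha⟩) = Multiplicative.ofAdd (1 : ℤ) :=
      PresentedGroup.toGroup.of (lenF_rels n)
    rw [h2, ih (fun b hb => hu b (by simp [hb])), ← ofAdd_add]
    congr 1
    push_cast [List.length_cons]
    omega

theorem eq_one_of_unit {n : ℕ} {x : B n} (h1 : x ∈ Bplus n n) (h2 : x⁻¹ ∈ Bplus n n) :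
    x = 1 := by
  obtain ⟨u, hu, rfl⟩ := mem_Bplus_iff.1 h1
  obtain ⟨v, hv, hxv⟩ := mem_Bplus_iff.1 h2
  have h3 : lenHom n (evl n u) * lenHom n ((evl n u)⁻¹) = 1 := by
    rw [← map_mul, mul_inv_cancel, map_one]
  rw [hxv, lenHom_evl hu, lenHom_evl hv, ← ofAdd_add] at h3
  have h4 : (u.length : ℤ) + (v.length : ℤ) = 0 := by
    have := congrArg Multiplicative.toAdd h3
    simpa using this
  have h5 : u = [] := by
    have : u.length = 0 := by omega
    simpa [List.length_eq_zero_iff] using this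
  subst h5
  rfl

end GarsideAux

namespace GarsideAux

open BraidWord

/-- The Garside element of `B n` (as evaluation of the word `DD (n-1)`). -/
noncomputable def dB (n : ℕ) : B n := evl n (DD (n - 1))

theorem dw_bdd (n : ℕ) : Bdd n (DD (n - 1)) := mem_DD_lt (n - 1)

theorem Dp_bdd (n k : ℕ) : Bdd n (Dp (n - 1) k) := mem_Dp_lt (n - 1) k

theorem evl_Dp (n : ℕ) : ∀ k, evl n (Dp (n - 1) k) = (dB n) ^ k := by
  intro k
  induction k with
  | zero => simp [Dp, evl]
  | succ k ih =>
    show evl n (DD (n-1) ++ Dp (n-1) k) = _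
    rw [evl_append, ih, pow_succ']
    rfl

theorem dB_mem (n : ℕ) : dB n ∈ Bplus n n := mem_Bplus_iff.2 ⟨_, dw_bdd n, rfl⟩

/-- The flip on letters. -/
def fl (n : ℕ) (a : ℕ) : ℕ := n - 2 - a

theorem fl_bdd {n : ℕ} {u : W} (hu : Bdd n u) : Bdd n (u.map (fl n)) := by
  intro a ha
  simp only [List.mem_map] at ha
  obtain ⟨b, hb, rfl⟩ := ha
  have := hu b hb
  unfold fl
  omega

theorem fl_invol {n : ℕ} {u : W} (hu : Bdd n u) :
    (u.map (fl n)).map (fun a => n - 1 - 1 - a) = u := by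
  induction u with
  | nil => rfl
  | cons a u ih =>
    have ha := hu a (by simp)
    simp only [List.map_cons]
    rw [ih (fun b hb => hu b (by simp [hb]))]
    congr 1
    unfold fl
    omega

theorem conj_ev {n : ℕ} {u : W} (hu : Bdd n u) :
    evl n (u.map (fl n)) * dB n = dB n * evl n u := by
  have h := D2w (n - 1) (u.map (fl n)) (fl_bdd hu)
  rw [fl_invol hu] at h
  have h2 := evl_eqv (n := n) (fun a ha => by
    rcases List.mem_append.1 ha with h' | h'
    exacts [fl_bdd hu a h', dw_bdd n a h']) h
  rw [evl_append, evl_append] at h2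
  exact h2

theorem conj_ev' {n : ℕ} {u : W} (hu : Bdd n u) :
    evl n u * (dB n)⁻¹ = (dB n)⁻¹ * evl n (u.map (fl n)) := by
  rw [mul_inv_eq_iff_eq_mul, mul_assoc, conj_ev hu, ← mul_assoc, inv_mul_cancel, one_mul]

theorem shift_delta {n : ℕ} : ∀ (l : ℕ) (u : W), Bdd n u →
    ∃ u', Bdd n u' ∧ evl n u * ((dB n) ^ l)⁻¹ = ((dB n) ^ l)⁻¹ * evl n u' := by
  intro l
  induction l with
  | zero => intro u hu; exact ⟨u, hu, by simp⟩
  | succ l ih =>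
    intro u hu
    obtain ⟨u', hb', he⟩ := ih (u.map (fl n)) (fl_bdd hu)
    refine ⟨u', hb', ?_⟩
    calc evl n u * ((dB n) ^ (l + 1))⁻¹
        = evl n u * (dB n)⁻¹ * ((dB n) ^ l)⁻¹ := by
          rw [pow_succ, mul_inv_rev, ← mul_assoc]
      _ = (dB n)⁻¹ * (evl n (u.map (fl n)) * ((dB n) ^ l)⁻¹) := by
          rw [conj_ev' hu, mul_assoc]
      _ = (dB n)⁻¹ * (((dB n) ^ l)⁻¹ * evl n u') := by rw [he]
      _ = ((dB n) ^ (l + 1))⁻¹ * evl n u' := by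
          rw [pow_succ, mul_inv_rev, mul_assoc]

theorem pow_inv_mul {G : Type*} [Group G] (x : G) {k N : ℕ} (h : k ≤ N) :
    (x ^ N)⁻¹ * x ^ k = (x ^ (N - k))⁻¹ := by
  have h1 : x ^ N = x ^ k * x ^ (N - k) := by
    rw [← pow_add]
    congr 1
    omega
  rw [h1, mul_inv_rev, mul_assoc, inv_mul_cancel, mul_one]

/-- Every braid is a left fraction of positive braids. -/
theorem frac_exists (n : ℕ) (β : B n) :
    ∃ (k : ℕ) (c : W), Bdd n c ∧ β = ((dB n) ^ k)⁻¹ * evl n c := by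
  let H : Subgroup (B n) :=
    { carrier := {β | ∃ (k : ℕ) (c : W), Bdd n c ∧ β = ((dB n) ^ k)⁻¹ * evl n c}
      one_mem' := ⟨0, [], fun a ha => by simp at ha, by simp [evl_nil]⟩
      mul_mem' := by
        rintro x y ⟨k, u, hu, rfl⟩ ⟨l, v, hv, rfl⟩
        obtain ⟨u', hu', he⟩ := shift_delta l u hu
        refine ⟨l + k, u' ++ v, fun a ha => ?_, ?_⟩
        · rcases List.mem_append.1 ha with h | h
          exacts [hu' a h, hv a h]
        · rw [evl_append]
          calc ((dB n) ^ k)⁻¹ * evl n u * (((dB n) ^ l)⁻¹ * evl n v)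
              = ((dB n) ^ k)⁻¹ * (evl n u * ((dB n) ^ l)⁻¹) * evl n v := by
                rw [mul_assoc, mul_assoc, mul_assoc]
            _ = ((dB n) ^ k)⁻¹ * (((dB n) ^ l)⁻¹ * evl n u') * evl n v := by rw [he]
            _ = ((dB n) ^ (l + k))⁻¹ * (evl n u' * evl n v) := by
                rw [pow_add, mul_inv_rev]
                group
      inv_mem' := by
        rintro x ⟨k, u, hu, rfl⟩
        obtain ⟨w, hw⟩ := dvd_Dp_of_le (k := n - 1) hu (j := u.length + k) (by omega)
        have hwb : Bdd n w := fun a ha => Dp_bdd n (u.length + k) a (hw.mem.2 (by simp [ha]))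
        have h1 : (dB n) ^ (u.length + k) = evl n u * evl n w := by
          rw [← evl_Dp n, ← evl_append]
          exact evl_eqv (Dp_bdd n _) hw
        have h2 : (evl n u)⁻¹ = evl n w * ((dB n) ^ (u.length + k))⁻¹ := by
          rw [h1, mul_inv_rev, ← mul_assoc, mul_inv_cancel, one_mul]
        obtain ⟨w', hw', he⟩ := shift_delta (u.length + k - k) w hwb
        refine ⟨u.length + k - k, w', hw', ?_⟩
        rw [mul_inv_rev, inv_inv, h2, mul_assoc,
          pow_inv_mul (dB n) (show k ≤ u.length + k from by omega), he]
      }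
  exact PresentedGroup.generated_by (braidRels (n - 1)) H
    (fun j => ⟨0, [(j : ℕ)], fun a ha => by simp at ha; omega, by
      show PresentedGroup.of j = ((dB n) ^ 0)⁻¹ * (gen n ((j : ℕ) + 1) * 1)
      rw [pow_zero, inv_one, one_mul, mul_one, gen_of j.isLt]⟩) β

/-- Left gcds in `Bplus n n`. -/
theorem ggcd {n : ℕ} {x y : B n} (hx : x ∈ Bplus n n) (hy : y ∈ Bplus n n) :
    ∃ g ∈ Bplus n n, LDiv n g x ∧ LDiv n g y ∧
      ∀ γ ∈ Bplus n n, LDiv n γ x → LDiv n γ y → LDiv n γ g := by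
  obtain ⟨u, hu, rfl⟩ := mem_Bplus_iff.1 hx
  obtain ⟨v, hv, rfl⟩ := mem_Bplus_iff.1 hy
  obtain ⟨g, hgu, hgv, huniv⟩ := gcd_exists u v
  have hgb : Bdd n g := by
    obtain ⟨w, hw⟩ := hgu
    exact fun a ha => (Bdd.of_eqv hw hu) a (by simp [ha])
  refine ⟨evl n g, mem_Bplus_iff.2 ⟨g, hgb, rfl⟩, (ldiv_iff hgb hu).2 hgu,
    (ldiv_iff hgb hv).2 hgv, ?_⟩
  intro γ hγ h1 h2
  obtain ⟨h, hh, rfl⟩ := mem_Bplus_iff.1 hγ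
  exact (ldiv_iff hh hgb).2 (huniv h ((ldiv_iff hh hu).1 h1) ((ldiv_iff hh hv).1 h2))

end GarsideAux

/-- Every `β ∈ B_n` admits a unique decomposition `β = β'⁻¹ β''` with
`β', β'' ∈ B⁺_n` whose only common left divisor in `B⁺_n` is `1`. -/
theorem garside_thurston_exists_unique (n : ℕ) (hn : 2 ≤ n) (β : B n) :
    ∃! p : B n × B n, p.1 ∈ Bplus n n ∧ p.2 ∈ Bplus n n ∧ β = p.1⁻¹ * p.2 ∧
      ∀ γ ∈ Bplus n n, LDiv n γ p.1 → LDiv n γ p.2 → γ = 1 := by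
  classical
  obtain ⟨k, c, hc, hβ⟩ := GarsideAux.frac_exists n β
  have ha₀ : (GarsideAux.dB n) ^ k ∈ Bplus n n := pow_mem (GarsideAux.dB_mem n) k
  have hb₀ : evl n c ∈ Bplus n n := GarsideAux.mem_Bplus_iff.2 ⟨c, hc, rfl⟩
  set a₀ : B n := (GarsideAux.dB n) ^ k with ha₀def
  set b₀ : B n := evl n c with hb₀def
  obtain ⟨g, hgM, hga, hgb, huniv⟩ := GarsideAux.ggcd ha₀ hb₀
  set a : B n := g⁻¹ * a₀ with hadef
  set b : B n := g⁻¹ * b₀ with hbdef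
  have haM : a ∈ Bplus n n := hga
  have hbM : b ∈ Bplus n n := hgb
  have hβ1 : β = a⁻¹ * b := by rw [hβ, hadef, hbdef]; group
  have hcopP : ∀ γ ∈ Bplus n n, LDiv n γ a → LDiv n γ b → γ = 1 := by
    intro γ hγ h1 h2
    have hgγ : g * γ ∈ Bplus n n := mul_mem hgM hγ
    have hga' : LDiv n (g * γ) a₀ := by
      show (g * γ)⁻¹ * a₀ ∈ Bplus n n
      have heq : (g * γ)⁻¹ * a₀ = γ⁻¹ * (g⁻¹ * a₀) := by group
      rw [heq]
      exact h1
    have hgb' : LDiv n (g * γ) b₀ := by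
      show (g * γ)⁻¹ * b₀ ∈ Bplus n n
      have heq : (g * γ)⁻¹ * b₀ = γ⁻¹ * (g⁻¹ * b₀) := by group
      rw [heq]
      exact h2
    have h3 : LDiv n (g * γ) g := huniv _ hgγ hga' hgb'
    have h4 : γ⁻¹ ∈ Bplus n n := by
      have heq : (g * γ)⁻¹ * g = γ⁻¹ := by group
      rw [← heq]
      exact h3
    exact GarsideAux.eq_one_of_unit hγ h4
  refine ⟨(a, b), ⟨haM, hbM, hβ1, hcopP⟩, ?_⟩
  rintro ⟨cq, dq⟩ ⟨hcM, hdM, hβ2, hcop⟩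
  obtain ⟨j, e, he, ht⟩ := GarsideAux.frac_exists n (cq * a⁻¹)
  have hEM : (GarsideAux.dB n) ^ j ∈ Bplus n n := pow_mem (GarsideAux.dB_mem n) j
  have hFM : evl n e ∈ Bplus n n := GarsideAux.mem_Bplus_iff.2 ⟨e, he, rfl⟩
  set E : B n := (GarsideAux.dB n) ^ j with hEdef
  set F : B n := evl n e with hFdef
  have hFa : F * a = E * cq := by
    have h5 : E * (cq * a⁻¹) = F := by rw [ht]; group
    calc F * a = E * (cq * a⁻¹) * a := by rw [h5]
      _ = E * cq := by group
  have hab_eq : a⁻¹ * b = cq⁻¹ * dq := by rw [← hβ1, hβ2]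
  have hFb : F * b = E * dq := by
    calc F * b = (F * a) * (a⁻¹ * b) := by group
      _ = (E * cq) * (cq⁻¹ * dq) := by rw [hFa, hab_eq]
      _ = E * dq := by group
  obtain ⟨G, hGM, hGu, hGv, hGuniv⟩ := GarsideAux.ggcd (mul_mem hFM haM) (mul_mem hFM hbM)
  have hFu : LDiv n F (F * a) := by
    show F⁻¹ * (F * a) ∈ Bplus n n
    rw [inv_mul_cancel_left]
    exact haM
  have hFv : LDiv n F (F * b) := by
    show F⁻¹ * (F * b) ∈ Bplus n n
    rw [inv_mul_cancel_left]
    exact hbM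
  have hFG : LDiv n F G := hGuniv F hFM hFu hFv
  have hg'a : LDiv n (F⁻¹ * G) a := by
    show (F⁻¹ * G)⁻¹ * a ∈ Bplus n n
    have heq : (F⁻¹ * G)⁻¹ * a = G⁻¹ * (F * a) := by group
    rw [heq]
    exact hGu
  have hg'b : LDiv n (F⁻¹ * G) b := by
    show (F⁻¹ * G)⁻¹ * b ∈ Bplus n n
    have heq : (F⁻¹ * G)⁻¹ * b = G⁻¹ * (F * b) := by group
    rw [heq]
    exact hGv
  have hFG1 : F = G := inv_mul_eq_one.mp (hcopP _ hFG hg'a hg'b)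
  have hEu : LDiv n E (F * a) := by
    show E⁻¹ * (F * a) ∈ Bplus n n
    rw [hFa, inv_mul_cancel_left]
    exact hcM
  have hEv : LDiv n E (F * b) := by
    show E⁻¹ * (F * b) ∈ Bplus n n
    rw [hFb, inv_mul_cancel_left]
    exact hdM
  have hEG : LDiv n E G := hGuniv E hEM hEu hEv
  have he'c : LDiv n (E⁻¹ * G) cq := by
    show (E⁻¹ * G)⁻¹ * cq ∈ Bplus n n
    have heq : (E⁻¹ * G)⁻¹ * cq = G⁻¹ * (E * cq) := by group
    rw [heq, ← hFa]
    exact hGu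
  have he'd : LDiv n (E⁻¹ * G) dq := by
    show (E⁻¹ * G)⁻¹ * dq ∈ Bplus n n
    have heq : (E⁻¹ * G)⁻¹ * dq = G⁻¹ * (E * dq) := by group
    rw [heq, ← hFb]
    exact hGv
  have hEG1 : E = G := inv_mul_eq_one.mp (hcop _ hEG he'c he'd)
  have ht1 : cq * a⁻¹ = 1 := by
    rw [ht, hEG1, hFG1, inv_mul_cancel]
  have hcq : cq = a := mul_inv_eq_one.mp ht1
  have hdq : dq = b := by
    have h7 : dq = cq * (cq⁻¹ * dq) := by group
    rw [h7, ← hab_eq, hcq]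
    group
  exact Prod.ext hcq hdq


end Braid
end

section
/- Let n ≥ 3, let d be a nonnegative integer, and let β ∈ B⁺_n satisfy Δ̂_{n−1,d} ≤ β ≤ Δ_n^d in the Dehornoy ordering, where Δ̂_{n−1,d} = Δ_n^d Δ_{n−1}^{−d}. Then the quotient Δ_n^{−d} β lies in the subgroup B_{n−1} of B_n. -/
namespace Braid

open FreeGroup

def aFun (p : ℕ) : ℕ → FreeGroup ℕ := fun k =>
  if k = p then .of p * .of (p+1) * (.of p)⁻¹ else if k = p + 1 then .of p else .of k

def aFunInv (p : ℕ) : ℕ → FreeGroup ℕ := fun k =>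
  if k = p then .of (p+1) else if k = p + 1 then (.of (p+1))⁻¹ * .of p * .of (p+1) else .of k

def AHom (p : ℕ) : FreeGroup ℕ →* FreeGroup ℕ := FreeGroup.lift (aFun p)
def AInvHom (p : ℕ) : FreeGroup ℕ →* FreeGroup ℕ := FreeGroup.lift (aFunInv p)

lemma AHom_comp_AInvHom (p : ℕ) : (AHom p).comp (AInvHom p) = MonoidHom.id _ := by
  apply FreeGroup.ext_hom
  intro k
  by_cases h1 : k = p
  · rw [h1]; simp [AHom, AInvHom, aFun, aFunInv]
  · by_cases h2 : k = p + 1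
    · rw [h2]; simp [AHom, AInvHom, aFun, aFunInv]; group
    · simp [AHom, AInvHom, aFun, aFunInv, h1, h2]

lemma AInvHom_comp_AHom (p : ℕ) : (AInvHom p).comp (AHom p) = MonoidHom.id _ := by
  apply FreeGroup.ext_hom
  intro k
  by_cases h1 : k = p
  · rw [h1]; simp [AHom, AInvHom, aFun, aFunInv]; group
  · by_cases h2 : k = p + 1
    · rw [h2]; simp [AHom, AInvHom, aFun, aFunInv]
    · simp [AHom, AInvHom, aFun, aFunInv, h1, h2]

def A (p : ℕ) : MulAut (FreeGroup ℕ) :=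
  MonoidHom.toMulEquiv (AHom p) (AInvHom p) (AInvHom_comp_AHom p) (AHom_comp_AInvHom p)

lemma A_of (p k : ℕ) : A p (.of k) = aFun p k := by
  simp [A, AHom, MonoidHom.toMulEquiv]

lemma A_symm_of (p k : ℕ) : (A p).symm (.of k) = aFunInv p k := by
  simp [A, AInvHom, MonoidHom.toMulEquiv]

lemma mulaut_ext {f g : MulAut (FreeGroup ℕ)} (h : ∀ k, f (.of k) = g (.of k)) : f = g := by
  have : (f : FreeGroup ℕ →* FreeGroup ℕ) = (g : FreeGroup ℕ →* FreeGroup ℕ) :=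
    FreeGroup.ext_hom _ _ h
  ext x
  exact congrArg (fun (h : FreeGroup ℕ →* FreeGroup ℕ) => h x) this

lemma A_comm (p q : ℕ) (h : p + 2 ≤ q) : A p * A q = A q * A p := by
  apply mulaut_ext
  intro k
  simp only [MulAut.mul_apply]
  by_cases h1 : k = p
  · rw [h1]
    simp [A_of, aFun, _root_.map_mul, _root_.map_inv,
      show ¬p = q by omega, show ¬p = q+1 by omega,
      show ¬p+1 = q by omega, show ¬p+1 = q+1 by omega]
  · by_cases h2 : k = p + 1
    · rw [h2]
      simp [A_of, aFun, _root_.map_mul, _root_.map_inv,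
        show ¬p+1 = q by omega, show ¬p+1 = q+1 by omega, show ¬p = q by omega,
        show ¬p = q + 1 by omega]
    · by_cases h3 : k = q
      · rw [h3]
        simp [A_of, aFun, _root_.map_mul, _root_.map_inv,
          show ¬q = p by omega, show ¬q = p+1 by omega,
          show ¬q+1 = p by omega, show ¬q+1 = p+1 by omega]
      · by_cases h4 : k = q + 1
        · rw [h4]
          simp [A_of, aFun, _root_.map_mul, _root_.map_inv,
            show ¬q+1 = p by omega, show ¬q+1 = p+1 by omega, show ¬q = p by omega,
            show ¬q = p + 1 by omega]
        · simp [A_of, aFun, h1, h2, h3, h4]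

lemma A_braid (p : ℕ) : A p * A (p+1) * A p = A (p+1) * A p * A (p+1) := by
  apply mulaut_ext
  intro k
  simp only [MulAut.mul_apply]
  by_cases h1 : k = p
  · rw [h1]
    simp only [A_of, aFun, _root_.map_mul, _root_.map_inv, if_pos,
      if_neg (show ¬p = p + 1 by omega), if_neg (show ¬(p:ℕ)+1 = p by omega),
      if_neg (show ¬(p:ℕ)+1+1 = p by omega), if_neg (show ¬(p:ℕ)+1+1 = p+1 by omega),
      if_neg (show ¬(p:ℕ) = p+1+1 by omega), if_neg (show ¬(p:ℕ)+1 = p+1+1 by omega)]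
    group
  · by_cases h2 : k = p + 1
    · rw [h2]
      simp only [A_of, aFun, _root_.map_mul, _root_.map_inv, if_pos,
        if_neg (show ¬p = p + 1 by omega), if_neg (show ¬(p:ℕ)+1 = p by omega),
        if_neg (show ¬(p:ℕ)+1+1 = p by omega), if_neg (show ¬(p:ℕ)+1+1 = p+1 by omega),
        if_neg (show ¬(p:ℕ) = p+1+1 by omega), if_neg (show ¬(p:ℕ)+1 = p+1+1 by omega)]
    · by_cases h3 : k = p + 2
      · rw [h3]
        simp only [show (p:ℕ)+2 = p+1+1 from rfl, A_of, aFun, _root_.map_mul, _root_.map_inv,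
          if_pos, if_neg (show ¬p = p + 1 by omega), if_neg (show ¬(p:ℕ)+1 = p by omega),
          if_neg (show ¬(p:ℕ)+1+1 = p by omega), if_neg (show ¬(p:ℕ)+1+1 = p+1 by omega),
          if_neg (show ¬(p:ℕ) = p+1+1 by omega), if_neg (show ¬(p:ℕ)+1 = p+1+1 by omega)]
      · simp [A_of, aFun, h1, h2, show ¬k = p+1+1 by omega]

-- continuing inside namespace Braid (appended to P1 before `end Braid`)

abbrev Wd := List (ℕ × Bool)

def rstep (x : ℕ × Bool) (l : Wd) : Wd :=
  match l with
  | [] => [x]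
  | y :: ys => if x.1 = y.1 ∧ x.2 = !y.2 then ys else x :: y :: ys

lemma rstep_nil (x : ℕ × Bool) : rstep x [] = [x] := rfl

lemma rstep_cons_neg {x y : ℕ × Bool} {l : Wd} (h : ¬(x.1 = y.1 ∧ x.2 = !y.2)) :
    rstep x (y::l) = x::y::l := by simp [rstep, h]

lemma rstep_cons_pos {x y : ℕ × Bool} {l : Wd} (h : x.1 = y.1 ∧ x.2 = !y.2) :
    rstep x (y::l) = l := by simp [rstep, h]

lemma reduce_cons'' (x : ℕ × Bool) (L : Wd) : reduce (x :: L) = rstep x (reduce L) := by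
  rw [FreeGroup.reduce.cons]
  cases reduce L with
  | nil => rfl
  | cons y ys => rfl

lemma reduce_append (l₁ l₂ : Wd) : reduce (l₁ ++ l₂) = l₁.foldr rstep (reduce l₂) := by
  induction l₁ with
  | nil => rfl
  | cons x l ih => rw [List.cons_append, reduce_cons'', ih]; rfl

lemma reduced_of_reduced_cons {x : ℕ × Bool} {l : Wd} (h : reduce (x::l) = x::l) :
    reduce l = l := by
  rw [reduce_cons''] at h
  rcases hr : reduce l with _ | ⟨y, ys⟩
  · rw [hr, rstep_nil] at h
    have h2 : ([] : Wd) = l := by simpa using congrArg List.tail h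
    exact h2
  · rw [hr] at h
    by_cases hc : x.1 = y.1 ∧ x.2 = !y.2
    · rw [rstep_cons_pos hc] at h
      have hle : (reduce l).length ≤ l.length :=
        (FreeGroup.Red.sublist (FreeGroup.reduce.red)).length_le
      rw [hr, h] at hle
      simp at hle
    · rw [rstep_cons_neg hc] at h
      have h2 : y :: ys = l := by simpa using congrArg List.tail h
      exact h2

lemma not_cancel_of_reduced_cons_cons {x y : ℕ × Bool} {l : Wd}
    (h : reduce (x::y::l) = x::y::l) : ¬(x.1 = y.1 ∧ x.2 = !y.2) := by
  intro hc
  obtain ⟨h1, h2⟩ := hc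
  have hx : x = (y.1, !y.2) := by
    cases x; cases y; simp_all
  have hy : y = (y.1, y.2) := rfl
  have : reduce (x::y::l) = [] ++ (y.1, !y.2) :: (y.1, !(!y.2)) :: l := by
    rw [h, hx]; simp
  exact FreeGroup.reduce.not this

def imgA (p : ℕ) : ℕ × Bool → Wd := fun x =>
  if x.1 = p then [(p,true),(p+1,x.2),(p,false)]
  else if x.1 = p+1 then [(p,x.2)] else [x]

def mySub (p : ℕ) (w : Wd) : Wd := reduce (w.flatMap (imgA p))

lemma mySub_nil (p : ℕ) : mySub p [] = [] := rfl

lemma mySub_cons (p : ℕ) (x : ℕ × Bool) (w : Wd) :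
    mySub p (x::w) = (imgA p x).foldr rstep (mySub p w) := by
  rw [mySub, List.flatMap_cons, reduce_append]; rfl

lemma mySub_cons_low (p i : ℕ) (b : Bool) (w : Wd) (h1 : i ≠ p) (h2 : i ≠ p+1) :
    mySub p ((i,b)::w) = rstep (i,b) (mySub p w) := by
  rw [mySub_cons, imgA]; simp [h1, h2]

lemma mySub_cons_p (p : ℕ) (e : Bool) (w : Wd) :
    mySub p ((p,e)::w) = rstep (p,true) (rstep (p+1,e) (rstep (p,false) (mySub p w))) := by
  rw [mySub_cons, imgA]; simp

lemma mySub_cons_psucc (p : ℕ) (e : Bool) (w : Wd) :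
    mySub p ((p+1,e)::w) = rstep (p,e) (mySub p w) := by
  rw [mySub_cons, imgA]; simp [show ¬(p+1 = p) by omega]

def headOk (p : ℕ) (z : Wd) : Prop :=
  ∀ c, z.head? = some c → (c.1 ≠ p ∧ c.1 ≠ p+1) ∨ c = (p, true)

lemma bool_eq_of_not_cancel {e e' : Bool} (h : ¬(e = !e')) : e' = e := by
  cases e <;> cases e' <;> simp_all

lemma mySub_clauses (p : ℕ) : ∀ w : Wd, FreeGroup.reduce w = w →
    ((∀ i b rest, w = (i,b)::rest → i ≠ p → i ≠ p+1 →
        mySub p w = (i,b) :: mySub p rest)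
  ∧ (∀ e rest, w = (p,e)::rest → ∃ z, mySub p w = (p,true)::(p+1,e)::z)
  ∧ (∀ rest, w = (p+1,true)::rest →
        mySub p w = (p,true) :: mySub p rest ∧ headOk p (mySub p rest))
  ∧ (∀ rest, w = (p+1,false)::rest →
        (∃ z, mySub p w = (p,false)::z) ∨
        (∃ e z rest', mySub p w = (p+1,e)::z ∧ rest = (p,e)::rest'))) := by
  intro w
  induction w with
  | nil =>
    intro _
    refine ⟨?_, ?_, ?_, ?_⟩ <;> intros <;> simp_all
  | cons x rest ih =>
    intro hred
    have hredr : FreeGroup.reduce rest = rest := reduced_of_reduced_cons hred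
    obtain ⟨ihA, ihB, ihC, ihD⟩ := ih hredr
    have hM : (rest = [] ∧ mySub p rest = [])
        ∨ (∃ i' b' r₂, rest = (i',b')::r₂ ∧ i' ≠ p ∧ i' ≠ p+1 ∧
            mySub p rest = (i',b')::mySub p r₂)
        ∨ (∃ e' r₂ z, rest = (p,e')::r₂ ∧ mySub p rest = (p,true)::(p+1,e')::z)
        ∨ (∃ r₂, rest = (p+1,true)::r₂ ∧ mySub p rest = (p,true)::mySub p r₂ ∧
            headOk p (mySub p r₂))
        ∨ (∃ r₂, rest = (p+1,false)::r₂ ∧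
            ((∃ z, mySub p rest = (p,false)::z) ∨
             (∃ e z r₃, mySub p rest = (p+1,e)::z ∧ r₂ = (p,e)::r₃))) := by
      rcases rest with _ | ⟨⟨i', b'⟩, r₂⟩
      · exact Or.inl ⟨rfl, rfl⟩
      · by_cases h1 : i' = p
        · subst h1
          obtain ⟨z, hz⟩ := ihB b' r₂ rfl
          exact Or.inr (Or.inr (Or.inl ⟨b', r₂, z, rfl, hz⟩))
        · by_cases h2 : i' = p + 1
          · subst h2
            cases b'
            · exact Or.inr (Or.inr (Or.inr (Or.inr ⟨r₂, rfl, ihD r₂ rfl⟩)))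
            · obtain ⟨hz, hok⟩ := ihC r₂ rfl
              exact Or.inr (Or.inr (Or.inr (Or.inl ⟨r₂, rfl, hz, hok⟩)))
          · exact Or.inr (Or.inl ⟨i', b', r₂, rfl, h1, h2, ihA i' b' r₂ rfl h1 h2⟩)
    refine ⟨?_, ?_, ?_, ?_⟩
    · -- clause A : low letter
      rintro i b rest' heq hip hip1
      obtain ⟨hx, hr⟩ := List.cons_eq_cons.mp heq
      subst hx; subst hr
      rw [mySub_cons_low p i b rest hip hip1]
      rcases hM with ⟨hr0, hm⟩ | ⟨i', b', r₂, hr0, h1, h2, hm⟩ |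
          ⟨e', r₂, z, hr0, hm⟩ | ⟨r₂, hr0, hm, hok⟩ | ⟨r₂, hr0, hm⟩
      · rw [hm, rstep_nil]
      · rw [hm]
        subst hr0
        have hadj := not_cancel_of_reduced_cons_cons hred
        exact rstep_cons_neg (by simpa using hadj)
      · rw [hm]
        exact rstep_cons_neg (by simp [hip])
      · rw [hm]
        exact rstep_cons_neg (by simp [hip])
      · rcases hm with ⟨z, hm⟩ | ⟨e, z, r₃, hm, _⟩
        · rw [hm]; exact rstep_cons_neg (by simp [hip])
        · rw [hm]; exact rstep_cons_neg (by simp [hip1])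
    · -- clause B : letter (p, e)
      rintro e rest' heq
      obtain ⟨hx, hr⟩ := List.cons_eq_cons.mp heq
      subst hx; subst hr
      rw [mySub_cons_p]
      have key : ∃ z, rstep (p+1,e) (rstep (p,false) (mySub p rest)) = (p+1,e)::z := by
        rcases hM with ⟨hr0, hm⟩ | ⟨i', b', r₂, hr0, h1, h2, hm⟩ |
            ⟨e', r₂, z, hr0, hm⟩ | ⟨r₂, hr0, hm, hok⟩ | ⟨r₂, hr0, hm⟩
        · rw [hm, rstep_nil]
          exact ⟨_, rstep_cons_neg (by simp [show p+1 ≠ p by omega])⟩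
        · rw [hm, rstep_cons_neg (by simp [Ne.symm h1]),
            rstep_cons_neg (by simp [show p+1 ≠ p by omega])]
          exact ⟨_, rfl⟩
        · subst hr0
          have hadj := not_cancel_of_reduced_cons_cons hred
          have he : e' = e := bool_eq_of_not_cancel (by simpa using hadj)
          subst he
          rw [hm, rstep_cons_pos (by simp),
            rstep_cons_neg (by simp)]
          exact ⟨_, rfl⟩
        · rw [hm, rstep_cons_pos (by simp)]
          rcases hz : mySub p r₂ with _ | ⟨c, z₃⟩
          · rw [rstep_nil]; exact ⟨_, rfl⟩
          · have := hok c (by rw [hz]; rfl)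
            refine ⟨_, rstep_cons_neg ?_⟩
            rcases this with ⟨hc1, hc2⟩ | hc
            · simp [Ne.symm hc2]
            · subst hc; simp [show p+1 ≠ p by omega]
        · rcases hm with ⟨z, hm⟩ | ⟨e₂, z, r₃, hm, _⟩
          · rw [hm, rstep_cons_neg (by simp),
              rstep_cons_neg (by simp [show p+1 ≠ p by omega])]
            exact ⟨_, rfl⟩
          · rw [hm, rstep_cons_neg (by simp [show p ≠ p+1 by omega]),
              rstep_cons_neg (by simp [show p+1 ≠ p by omega])]
            exact ⟨_, rfl⟩
      obtain ⟨z, hz⟩ := key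
      rw [hz]
      exact ⟨z, rstep_cons_neg (by simp [show p ≠ p+1 by omega])⟩
    · -- clause C : letter (p+1, true)
      rintro rest' heq
      obtain ⟨hx, hr⟩ := List.cons_eq_cons.mp heq
      subst hx; subst hr
      rw [mySub_cons_psucc p true rest]
      rcases hM with ⟨hr0, hm⟩ | ⟨i', b', r₂, hr0, h1, h2, hm⟩ |
          ⟨e', r₂, z, hr0, hm⟩ | ⟨r₂, hr0, hm, hok⟩ | ⟨r₂, hr0, hm⟩
      · rw [hm, rstep_nil]
        exact ⟨rfl, by intro c hc; simp at hc⟩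
      · rw [hm]
        refine ⟨rstep_cons_neg (by simp [Ne.symm h1]), ?_⟩
        intro c hc
        simp at hc
        subst hc
        exact Or.inl ⟨h1, h2⟩
      · rw [hm]
        refine ⟨rstep_cons_neg (by simp), ?_⟩
        intro c hc
        simp at hc
        subst hc
        exact Or.inr rfl
      · rw [hm]
        refine ⟨rstep_cons_neg (by simp), ?_⟩
        intro c hc
        simp at hc
        subst hc
        exact Or.inr rfl
      · subst hr0
        have hadj := not_cancel_of_reduced_cons_cons hred
        exact absurd (by simp : ((p+1 : ℕ),true).1 = ((p+1 : ℕ),false).1 ∧ true = !false) hadj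
    · -- clause D : letter (p+1, false)
      rintro rest' heq
      obtain ⟨hx, hr⟩ := List.cons_eq_cons.mp heq
      subst hx; subst hr
      rw [mySub_cons_psucc p false rest]
      rcases hM with ⟨hr0, hm⟩ | ⟨i', b', r₂, hr0, h1, h2, hm⟩ |
          ⟨e', r₂, z, hr0, hm⟩ | ⟨r₂, hr0, hm, hok⟩ | ⟨r₂, hr0, hm⟩
      · rw [hm, rstep_nil]
        exact Or.inl ⟨_, rfl⟩
      · rw [hm, rstep_cons_neg (by simp [Ne.symm h1])]
        exact Or.inl ⟨_, rfl⟩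
      · rw [hm, rstep_cons_pos (by simp)]
        exact Or.inr ⟨e', z, r₂, rfl, hr0⟩
      · subst hr0
        have hadj := not_cancel_of_reduced_cons_cons hred
        exact absurd (by simp : ((p+1 : ℕ),false).1 = ((p+1 : ℕ),true).1 ∧ false = !true) hadj
      · rcases hm with ⟨z, hm⟩ | ⟨e₂, z, r₃, hm, _⟩
        · rw [hm, rstep_cons_neg (by simp)]
          exact Or.inl ⟨_, rfl⟩
        · rw [hm, rstep_cons_neg (by simp [show p ≠ p+1 by omega])]
          exact Or.inl ⟨_, rfl⟩


lemma imgA_p (p : ℕ) (b : Bool) : imgA p (p, b) = [(p,true),(p+1,b),(p,false)] := by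
  simp [imgA]

lemma imgA_psucc (p : ℕ) (b : Bool) : imgA p (p+1, b) = [(p,b)] := by
  simp [imgA, show (p:ℕ)+1 ≠ p by omega]

lemma imgA_low (p k : ℕ) (b : Bool) (h1 : k ≠ p) (h2 : k ≠ p+1) : imgA p (k,b) = [(k,b)] := by
  simp [imgA, h1, h2]

lemma A_of_p (p : ℕ) : A p (.of p) = .of p * .of (p+1) * (.of p)⁻¹ := by
  rw [A_of]; simp [aFun]

lemma A_of_psucc (p : ℕ) : A p (.of (p+1)) = .of p := by
  rw [A_of]; simp [aFun, show (p:ℕ)+1 ≠ p by omega]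

lemma A_of_low (p k : ℕ) (h1 : k ≠ p) (h2 : k ≠ p+1) : A p (.of k) = .of k := by
  rw [A_of]; simp [aFun, h1, h2]

lemma A_mk_singleton (p k : ℕ) (b : Bool) :
    A p (FreeGroup.mk [(k,b)]) = FreeGroup.mk (imgA p (k,b)) := by
  have hof : ∀ j : ℕ, FreeGroup.of j = FreeGroup.mk [(j, true)] := fun _ => rfl
  have hofinv : ∀ j : ℕ, (FreeGroup.of j)⁻¹ = FreeGroup.mk [(j, false)] := by
    intro j
    rw [hof, FreeGroup.inv_mk]; rfl
  by_cases h1 : k = p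
  · rw [h1, imgA_p]
    cases b
    · rw [show FreeGroup.mk [(p,false)] = (FreeGroup.of p)⁻¹ from (hofinv p).symm,
        _root_.map_inv, A_of_p]
      simp [hof, FreeGroup.inv_mk, FreeGroup.mul_mk, FreeGroup.invRev]
    · rw [show FreeGroup.mk [(p,true)] = FreeGroup.of p from rfl, A_of_p]
      simp [hof, FreeGroup.inv_mk, FreeGroup.mul_mk, FreeGroup.invRev]
  · by_cases h2 : k = p+1
    · rw [h2, imgA_psucc]
      cases b
      · rw [show FreeGroup.mk [(p+1,false)] = (FreeGroup.of (p+1))⁻¹ from (hofinv (p+1)).symm,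
          _root_.map_inv, A_of_psucc, hofinv p]
      · rw [show FreeGroup.mk [(p+1,true)] = FreeGroup.of (p+1) from rfl, A_of_psucc, hof p]
    · rw [imgA_low p k b h1 h2]
      cases b
      · rw [show FreeGroup.mk [(k,false)] = (FreeGroup.of k)⁻¹ from (hofinv k).symm,
          _root_.map_inv, A_of_low p k h1 h2, hofinv k]
      · rw [show FreeGroup.mk [(k,true)] = FreeGroup.of k from rfl, A_of_low p k h1 h2, hof k]

lemma A_mk (p : ℕ) (w : Wd) :
    A p (FreeGroup.mk w) = FreeGroup.mk (w.flatMap (imgA p)) := by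
  induction w with
  | nil => simp [show FreeGroup.mk ([] : Wd) = 1 from rfl]
  | cons x w ihw =>
    have h1 : FreeGroup.mk (x::w) = FreeGroup.mk [x] * FreeGroup.mk w := by
      rw [FreeGroup.mul_mk]; rfl
    have h2 : FreeGroup.mk ((x::w).flatMap (imgA p)) =
        FreeGroup.mk (imgA p x) * FreeGroup.mk (w.flatMap (imgA p)) := by
      rw [FreeGroup.mul_mk, List.flatMap_cons]
    rw [h1, _root_.map_mul, ihw, h2]
    rcases x with ⟨k, b⟩
    rw [A_mk_singleton]

lemma toWord_A (p : ℕ) (g : FreeGroup ℕ) :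
    (A p g).toWord = mySub p g.toWord := by
  conv_lhs => rw [← FreeGroup.mk_toWord (x := g)]
  rw [A_mk, FreeGroup.toWord_mk, mySub]

lemma head_A_iff {p k : ℕ} (hk1 : k ≠ p) (hk2 : k ≠ p+1) (c : Bool) (g : FreeGroup ℕ) :
    ((A p g).toWord).head? = some (k, c) ↔ (g.toWord).head? = some (k, c) := by
  rw [toWord_A]
  obtain ⟨clA, clB, clC, clD⟩ := mySub_clauses p g.toWord (FreeGroup.reduce_toWord g)
  rcases hw : g.toWord with _ | ⟨⟨i, b⟩, rest⟩
  · simp [mySub_nil]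
  · rw [hw] at clA clB clC clD
    by_cases h1 : i = p
    · rw [h1] at clB ⊢
      obtain ⟨z, hz⟩ := clB b rest rfl
      rw [hz]
      simp [hk1, hk2, Ne.symm hk1, Ne.symm hk2]
    · by_cases h2 : i = p+1
      · rw [h2] at clC clD ⊢
        cases b
        · rcases clD rest rfl with ⟨z, hz⟩ | ⟨e, z, r', hz, _⟩
          · rw [hz]; simp [hk1, hk2, Ne.symm hk1, Ne.symm hk2]
          · rw [hz]; simp [hk1, hk2, Ne.symm hk1, Ne.symm hk2]
        · obtain ⟨hz, _⟩ := clC rest rfl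
          rw [hz]; simp [hk1, hk2, Ne.symm hk1, Ne.symm hk2]
      · rw [clA i b rest rfl h1 h2]
        simp

lemma head_S {p : ℕ} (g : FreeGroup ℕ)
    (h : ((A p g).toWord).head? = some (p+1, false)) :
    (g.toWord).head? = some (p+1, false) := by
  rw [toWord_A] at h
  obtain ⟨clA, clB, clC, clD⟩ := mySub_clauses p g.toWord (FreeGroup.reduce_toWord g)
  rcases hw : g.toWord with _ | ⟨⟨i, b⟩, rest⟩
  · rw [hw] at h; simp [mySub_nil] at h
  · rw [hw] at clA clB clC clD h
    by_cases h1 : i = p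
    · rw [h1] at clB h
      obtain ⟨z, hz⟩ := clB b rest rfl
      rw [hz] at h
      simp [show p ≠ p + 1 by omega] at h
    · by_cases h2 : i = p+1
      · rw [h2]
        cases b
        · rfl
        · rw [h2] at clC h
          obtain ⟨hz, _⟩ := clC rest rfl
          rw [hz] at h
          simp [show p ≠ p + 1 by omega] at h
      · rw [clA i b rest rfl h1 h2] at h
        simp at h
        exact absurd h.1 h2

/-! ### The Dehornoy-type obstruction -/

def Bad (n : ℕ) (g : FreeGroup ℕ) : Prop :=
  g = .of n ∨ ((g.toWord).head? = some (n, false) ∧ (g.toWord).getLast? = some (n, true))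

lemma head_inv_toWord (g : FreeGroup ℕ) :
    (g⁻¹.toWord).head? = (g.toWord.getLast?).map (fun x => (x.1, !x.2)) := by
  rw [FreeGroup.toWord_inv, FreeGroup.invRev, List.head?_reverse, List.getLast?_map]

lemma getLast_iff_head_inv (g : FreeGroup ℕ) (k : ℕ) :
    (g.toWord).getLast? = some (k, true) ↔ (g⁻¹.toWord).head? = some (k, false) := by
  rw [head_inv_toWord]
  cases h : (g.toWord).getLast? with
  | none => simp
  | some c =>
    rcases c with ⟨j, b⟩
    cases b <;> simp

lemma A_symm_of_low (p k : ℕ) (h1 : k ≠ p) (h2 : k ≠ p+1) : (A p).symm (.of k) = .of k := by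
  rw [A_symm_of]; simp [aFunInv, h1, h2]

lemma A_symm_of_psucc (p : ℕ) :
    (A p).symm (.of (p+1)) = (.of (p+1))⁻¹ * .of p * .of (p+1) := by
  rw [A_symm_of]; simp [aFunInv, show (p:ℕ)+1 ≠ p by omega]

lemma bad_A_low {n p : ℕ} (hp : p + 1 < n) (g : FreeGroup ℕ) (h : Bad n (A p g)) :
    Bad n g := by
  have hk1 : (n:ℕ) ≠ p := by omega
  have hk2 : (n:ℕ) ≠ p+1 := by omega
  rcases h with h | ⟨hh, hl⟩
  · left
    have := congrArg (A p).symm h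
    rwa [MulEquiv.symm_apply_apply, A_symm_of_low p n hk1 hk2] at this
  · right
    refine ⟨(head_A_iff hk1 hk2 false g).mp hh, ?_⟩
    rw [getLast_iff_head_inv] at hl ⊢
    rw [show (A p g)⁻¹ = A p g⁻¹ from (_root_.map_inv (A p) g).symm] at hl
    exact (head_A_iff hk1 hk2 false g⁻¹).mp hl

lemma bad_A_low_fwd {n p : ℕ} (hp : p + 1 < n) (g : FreeGroup ℕ) (h : Bad n g) :
    Bad n (A p g) := by
  have hk1 : (n:ℕ) ≠ p := by omega
  have hk2 : (n:ℕ) ≠ p+1 := by omega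
  rcases h with h | ⟨hh, hl⟩
  · left
    rw [h, A_of_low p n hk1 hk2]
  · right
    refine ⟨(head_A_iff hk1 hk2 false g).mpr hh, ?_⟩
    rw [getLast_iff_head_inv] at hl ⊢
    rw [show (A p g)⁻¹ = A p g⁻¹ from (_root_.map_inv (A p) g).symm]
    exact (head_A_iff hk1 hk2 false g⁻¹).mpr hl

lemma bad_A_low_symm {n p : ℕ} (hp : p + 1 < n) (g : FreeGroup ℕ)
    (h : Bad n ((A p).symm g)) : Bad n g := by
  have := bad_A_low_fwd hp ((A p).symm g) h
  rwa [MulEquiv.apply_symm_apply] at this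

lemma toWord_tat {n : ℕ} (hn : 3 ≤ n) :
    ((FreeGroup.of n)⁻¹ * FreeGroup.of (n-1) * FreeGroup.of n : FreeGroup ℕ).toWord
      = [(n, false), (n-1, true), (n, true)] := by
  have hne : (n : ℕ) - 1 ≠ n := by omega
  have h1 : ((FreeGroup.of n)⁻¹ * FreeGroup.of (n-1) * FreeGroup.of n : FreeGroup ℕ)
      = FreeGroup.mk [(n, false), (n-1, true), (n, true)] := by
    have hof : ∀ j : ℕ, (FreeGroup.of j : FreeGroup ℕ) = FreeGroup.mk [(j, true)] :=
      fun _ => rfl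
    have hofinv : ∀ j : ℕ, ((FreeGroup.of j)⁻¹ : FreeGroup ℕ) = FreeGroup.mk [(j, false)] := by
      intro j
      rw [hof, FreeGroup.inv_mk]; rfl
    rw [hofinv n, hof (n-1), hof n, FreeGroup.mul_mk, FreeGroup.mul_mk]
    rfl
  rw [h1, FreeGroup.toWord_mk, reduce_cons'', reduce_cons'', FreeGroup.reduce_singleton,
    rstep_cons_neg (by simp), rstep_cons_neg (by simp [Ne.symm hne])]

lemma bad_S {n : ℕ} (hn : 3 ≤ n) (g : FreeGroup ℕ) (h : Bad n (A (n-1) g)) :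
    Bad n g := by
  have hpn : (n:ℕ) - 1 + 1 = n := by omega
  rcases h with h | ⟨hh, hl⟩
  · have hg : g = (A (n-1)).symm (.of ((n-1)+1)) := by
      rw [hpn, ← h, MulEquiv.symm_apply_apply]
    rw [A_symm_of_psucc (n-1), hpn] at hg
    right
    rw [hg, toWord_tat hn]
    simp
  · right
    constructor
    · have := head_S (p := n-1) g (by rw [hpn]; exact hh)
      rwa [hpn] at this
    · rw [getLast_iff_head_inv] at hl ⊢
      rw [show (A (n-1) g)⁻¹ = A (n-1) g⁻¹ from (_root_.map_inv (A (n-1)) g).symm] at hl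
      have := head_S (p := n-1) g⁻¹ (by rw [hpn]; exact hl)
      rwa [hpn] at this

lemma bad_t (n : ℕ) : Bad n (.of n) := Or.inl rfl

lemma not_bad_a {n : ℕ} (hn : 3 ≤ n) : ¬ Bad n (.of (n-1)) := by
  intro h
  rcases h with h | ⟨hh, _⟩
  · exact absurd (FreeGroup.of_injective h) (by omega)
  · rw [FreeGroup.toWord_of] at hh
    simp at hh

/-! ### The Artin action of the braid group -/

lemma relhyp (n : ℕ) : ∀ r ∈ braidRels (n-1),
    FreeGroup.lift (fun i : Fin (n-1) => A ((i : ℕ) + 1)) r = 1 := by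
  intro r hr
  obtain ⟨i, j, hcase⟩ := hr
  rcases hcase with ⟨hij, rfl⟩ | ⟨hij, rfl⟩
  · simp only [_root_.map_mul, _root_.map_inv, FreeGroup.lift_apply_of]
    have hc : A ((i:ℕ)+1) * A ((j:ℕ)+1) = A ((j:ℕ)+1) * A ((i:ℕ)+1) :=
      A_comm _ _ (by omega)
    have h2 : A ((i:ℕ)+1) * A ((j:ℕ)+1) * (A ((i:ℕ)+1))⁻¹ * (A ((j:ℕ)+1))⁻¹
        = (A ((i:ℕ)+1) * A ((j:ℕ)+1)) * (A ((j:ℕ)+1) * A ((i:ℕ)+1))⁻¹ := by group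
    rw [h2, hc, mul_inv_cancel]
  · simp only [_root_.map_mul, _root_.map_inv, FreeGroup.lift_apply_of]
    have hb : A ((i:ℕ)+1) * A ((i:ℕ)+1+1) * A ((i:ℕ)+1) =
        A ((i:ℕ)+1+1) * A ((i:ℕ)+1) * A ((i:ℕ)+1+1) := A_braid _
    have hj : (j : ℕ) + 1 = (i:ℕ) + 1 + 1 := by omega
    rw [hj]
    have h2 : A ((i:ℕ)+1) * A ((i:ℕ)+1+1) * A ((i:ℕ)+1) * (A ((i:ℕ)+1+1))⁻¹ * (A ((i:ℕ)+1))⁻¹ *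
          (A ((i:ℕ)+1+1))⁻¹
        = (A ((i:ℕ)+1) * A ((i:ℕ)+1+1) * A ((i:ℕ)+1)) *
          (A ((i:ℕ)+1+1) * A ((i:ℕ)+1) * A ((i:ℕ)+1+1))⁻¹ := by group
    rw [h2, hb, mul_inv_cancel]

/-- The Artin action of the braid group `B n` on the free group. -/
def phi (n : ℕ) : B n →* MulAut (FreeGroup ℕ) :=
  PresentedGroup.toGroup (relhyp n)

lemma phi_gen {n i : ℕ} (h1 : 1 ≤ i) (h2 : i ≤ n - 1) : phi n (gen n i) = A i := by
  have hlt : i - 1 < n - 1 := by omega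
  rw [gen, dif_pos hlt]
  rw [show phi n (PresentedGroup.of (⟨i-1, hlt⟩ : Fin (n-1))) = A ((i-1 : ℕ) + 1) from
    PresentedGroup.toGroup.of (relhyp n)]
  congr 1
  omega

lemma phi_fix_t {n : ℕ} {β : B n} (hβ : β ∈ Bsub n (n-1)) :
    phi n β (FreeGroup.of n) = FreeGroup.of n := by
  induction hβ using Subgroup.closure_induction with
  | mem x hx =>
    obtain ⟨i, hi1, hi2, rfl⟩ := hx
    rw [phi_gen hi1 (by omega)]
    exact A_of_low i n (by omega) (by omega)
  | one => simp
  | mul x y hx hy ihx ihy =>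
    rw [_root_.map_mul, MulAut.mul_apply, ihy, ihx]
  | inv x hx ihx =>
    rw [_root_.map_inv]
    have : (phi n x)⁻¹ ((phi n x) (FreeGroup.of n)) = FreeGroup.of n := by
      simp
    rwa [ihx] at this

lemma evalWord_cons (n : ℕ) (x : ℕ × Bool) (w : List (ℕ × Bool)) :
    evalWord n (x :: w)
      = (if x.2 then gen n x.1 else (gen n x.1)⁻¹) * evalWord n w := by
  rw [evalWord, evalWord, List.map_cons, List.prod_cons]

lemma evalWord_append (n : ℕ) (w₁ w₂ : List (ℕ × Bool)) :
    evalWord n (w₁ ++ w₂) = evalWord n w₁ * evalWord n w₂ := by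
  rw [evalWord, evalWord, evalWord, List.map_append, List.prod_append]

lemma larue_main {n : ℕ} (hn : 3 ≤ n) :
    ∀ w : List (ℕ × Bool), (∀ p ∈ w, 1 ≤ p.1 ∧ p.1 ≤ n-1) → (n-1, false) ∉ w →
    (((n-1, true) ∈ w → ¬ Bad n (phi n (evalWord n w) (.of n)))
      ∧ ((n-1, true) ∉ w → phi n (evalWord n w) (.of n) = .of n)) := by
  intro w
  induction w with
  | nil =>
    intro _ _
    refine ⟨fun h => absurd h List.not_mem_nil, fun _ => ?_⟩
    rw [show evalWord n [] = 1 from rfl]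
    simp
  | cons x w ih =>
    intro hall hneg
    obtain ⟨hx1, hx2⟩ := hall x List.mem_cons_self
    have hallw : ∀ p ∈ w, 1 ≤ p.1 ∧ p.1 ≤ n-1 := fun p hp => hall p (List.mem_cons_of_mem x hp)
    have hnegw : (n-1, false) ∉ w := fun h => hneg (List.mem_cons_of_mem x h)
    obtain ⟨ih1, ih2⟩ := ih hallw hnegw
    rcases x with ⟨i, b⟩
    rw [evalWord_cons]
    constructor
    · intro hmem
      by_cases hi : i = n - 1
      · subst hi
        have hb : b = true := by
          cases b
          · exact absurd List.mem_cons_self hneg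
          · rfl
        subst hb
        simp only [if_true, ite_true, _root_.map_mul, MulAut.mul_apply]
        rw [phi_gen (by omega) (le_refl _)]
        by_cases hw : (n-1, true) ∈ w
        · intro hbad
          exact ih1 hw (bad_S hn _ hbad)
        · rw [ih2 hw]
          rw [show (FreeGroup.of n : FreeGroup ℕ) = .of ((n-1)+1) by rw [show n-1+1 = n by omega]]
          rw [A_of_psucc]
          exact not_bad_a hn
      · have hw : (n-1, true) ∈ w := by
          rcases List.mem_cons.mp hmem with h | h
          · exact absurd (congrArg Prod.fst h).symm hi
          · exact h
        have hy := ih1 hw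
        have hilt : i + 1 < n := by omega
        cases b
        · simp only [Bool.false_eq_true, if_false, ite_false, _root_.map_mul, _root_.map_inv,
            MulAut.mul_apply]
          rw [phi_gen hx1 hx2]
          intro hbad
          apply hy
          have : (A i)⁻¹ = (A i).symm := rfl
          rw [this] at hbad
          exact bad_A_low_symm hilt _ hbad
        · simp only [if_true, ite_true, _root_.map_mul, MulAut.mul_apply]
          rw [phi_gen hx1 hx2]
          intro hbad
          exact hy (bad_A_low hilt _ hbad)
    · intro hnotmem
      have hi : i ≠ n - 1 := by
        intro h
        subst h
        cases b
        · exact hneg List.mem_cons_self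
        · exact hnotmem List.mem_cons_self
      have hw : (n-1, true) ∉ w := fun h => hnotmem (List.mem_cons_of_mem _ h)
      have hfix := ih2 hw
      have hilt : i + 1 < n := by omega
      cases b
      · simp only [Bool.false_eq_true, if_false, ite_false, _root_.map_mul, _root_.map_inv,
          MulAut.mul_apply]
        rw [phi_gen hx1 hx2, hfix]
        have : (A i)⁻¹ = (A i).symm := rfl
        rw [this]
        exact A_symm_of_low i n (by omega) (by omega)
      · simp only [if_true, ite_true, _root_.map_mul, MulAut.mul_apply]
        rw [phi_gen hx1 hx2, hfix]
        exact A_of_low i n (by omega) (by omega)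

lemma larue_not_mem {n : ℕ} (hn : 3 ≤ n) (w : List (ℕ × Bool))
    (hall : ∀ p ∈ w, 1 ≤ p.1 ∧ p.1 ≤ n-1) (hpos : (n-1, true) ∈ w)
    (hneg : (n-1, false) ∉ w) :
    evalWord n w ∉ Bsub n (n-1) := by
  intro hmem
  have h1 := (larue_main hn w hall hneg).1 hpos
  rw [phi_fix_t hmem] at h1
  exact h1 (bad_t n)

/-! ### Membership lemmas -/

lemma gen_mem_Bsub {n i : ℕ} (h1 : 1 ≤ i) (h2 : i + 1 ≤ n - 1) :
    gen n i ∈ Bsub n (n-1) :=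
  Subgroup.subset_closure ⟨i, h1, h2, rfl⟩

lemma delta_mem_Bsub {n : ℕ} (hn : 3 ≤ n) : delta n (n-1) ∈ Bsub n (n-1) := by
  rw [delta]
  apply Subgroup.list_prod_mem
  intro x hx
  obtain ⟨j, hj, rfl⟩ := List.mem_map.mp hx
  rw [List.mem_reverse, List.mem_range] at hj
  apply Subgroup.list_prod_mem
  intro y hy
  obtain ⟨i, hi, rfl⟩ := List.mem_map.mp hy
  rw [List.mem_range'_1] at hi
  exact gen_mem_Bsub hi.1 (by omega)

lemma evalWord_mem_Bsub {n : ℕ} (w : List (ℕ × Bool))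
    (hall : ∀ p ∈ w, 1 ≤ p.1 ∧ p.1 ≤ n - 2) :
    evalWord n w ∈ Bsub n (n-1) := by
  rw [evalWord]
  apply Subgroup.list_prod_mem
  intro x hx
  obtain ⟨p, hp, rfl⟩ := List.mem_map.mp hx
  obtain ⟨h1, h2⟩ := hall p hp
  have hg : gen n p.1 ∈ Bsub n (n-1) := gen_mem_Bsub h1 (by omega)
  cases hb : p.2
  · simp only [Bool.false_eq_true, if_false, ite_false]
    exact inv_mem hg
  · simp only [if_true, ite_true]
    exact hg

/-- If `β ∈ B⁺_n` satisfies `Δ̂_{n-1,d} ≤ β ≤ Δ_n^d` in the Dehornoy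
ordering, then `Δ_n^{-d} β` lies in the subgroup `B_{n-1}` of `B_n`. -/
theorem quotient_mem_subgroup_of_between (n d : ℕ) (hn : 3 ≤ n) (β : B n)
    (hβ : β ∈ Bplus n n)
    (h1 : dle n (delta n n ^ d * (delta n (n - 1) ^ d)⁻¹) β)
    (h2 : dle n β (delta n n ^ d)) :
    (delta n n ^ d)⁻¹ * β ∈ Bsub n (n - 1) := by
  have hE : delta n (n-1) ^ d ∈ Bsub n (n-1) := pow_mem (delta_mem_Bsub hn) d
  rcases h2 with h2 | h2
  · obtain ⟨i, w, hi, ⟨hposi, hnegi, hbound⟩, hev⟩ := h2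
    have hi1 : 1 ≤ i := (hbound _ hposi).1
    by_cases hile : i ≤ n-2
    · have hmem := evalWord_mem_Bsub (n := n) w
        (fun p hp => ⟨(hbound p hp).1, le_trans (hbound p hp).2 hile⟩)
      rw [hev] at hmem
      have hmem2 : (β⁻¹ * delta n n ^ d)⁻¹ ∈ Bsub n (n-1) := inv_mem hmem
      rw [mul_inv_rev, inv_inv] at hmem2
      exact hmem2
    · have hieq : i = n-1 := by omega
      rcases h1 with h1 | h1
      · obtain ⟨i', w', hi', ⟨hposi', hnegi', hbound'⟩, hev'⟩ := h1
        have hi'1 : 1 ≤ i' := (hbound' _ hposi').1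
        by_cases hile' : i' ≤ n-2
        · have hw' := evalWord_mem_Bsub (n := n) w'
            (fun p hp => ⟨(hbound' p hp).1, le_trans (hbound' p hp).2 hile'⟩)
          rw [hev'] at hw'
          have h3 : (delta n n ^ d)⁻¹ * β
              = (delta n (n-1) ^ d)⁻¹ *
                ((delta n n ^ d * (delta n (n-1) ^ d)⁻¹)⁻¹ * β) := by
            group
          rw [h3]
          exact mul_mem (inv_mem hE) hw'
        · have hieq' : i' = n-1 := by omega
          exfalso
          have hcat : evalWord n (w' ++ w) = delta n (n-1) ^ d := by
            rw [evalWord_append, hev', hev]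
            group
          have hall : ∀ p ∈ w' ++ w, 1 ≤ p.1 ∧ p.1 ≤ n-1 := by
            intro p hp
            rcases List.mem_append.mp hp with hp | hp
            · exact ⟨(hbound' p hp).1, by have := (hbound' p hp).2; omega⟩
            · exact ⟨(hbound p hp).1, by have := (hbound p hp).2; omega⟩
          have hpos : (n-1, true) ∈ w' ++ w := by
            rw [hieq'] at hposi'
            exact List.mem_append.mpr (Or.inl hposi')
          have hneg : (n-1, false) ∉ w' ++ w := by
            intro hmem
            rcases List.mem_append.mp hmem with hmem | hmem
            · rw [hieq'] at hnegi'
              exact hnegi' hmem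
            · rw [hieq] at hnegi
              exact hnegi hmem
          exact larue_not_mem hn (w' ++ w) hall hpos hneg (hcat ▸ hE)
      · rw [← h1]
        have h3 : (delta n n ^ d)⁻¹ * (delta n n ^ d * (delta n (n-1) ^ d)⁻¹)
            = (delta n (n-1) ^ d)⁻¹ := by group
        rw [h3]
        exact inv_mem hE
  · rw [h2, inv_mul_cancel]
    exact one_mem _

end Braid
end
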